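/- arXiv:math/9409226 — 11 statements merged into one kernel-verified Lean document; each statement's English description precedes it below -/
import Mathlib

section
/- Let c be a point in the plane and let s₁, ..., s₆ be six points such that the distance from c to each sᵢ is at most 2r. Then there exist distinct indices j, k such that the distance between s_j and s_k is at most 2r. -/
open Real

lemma pigeon6 (t : Fin 6 → ℝ)
    (hd : ∀ i j, i ≠ j → π/3 < |t i - t j| ∧ |t i - t j| < 5*π/3) : False := by
  set g : Fin 6 → ℝ := t ∘ Tuple.sort t with hg
  have hmono : Monotone g := Tuple.monotone_sort t
  have key : ∀ a b : Fin 6, a < b → g a + π/3 < g b := by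
    intro a b hab
    have hne : (Tuple.sort t) a ≠ (Tuple.sort t) b := fun hEq =>
      absurd ((Equiv.injective _) hEq) (Fin.ne_of_lt hab)
    have h1 : π/3 < |g a - g b| := (hd _ _ hne).1
    have hle : g a ≤ g b := hmono hab.le
    rcases abs_cases (g a - g b) with ⟨he, _⟩ | ⟨he, _⟩ <;> rw [he] at h1 <;> linarith
  have h01 := key 0 1 (by decide)
  have h12 := key 1 2 (by decide)
  have h23 := key 2 3 (by decide)
  have h34 := key 3 4 (by decide)
  have h45 := key 4 5 (by decide)
  have hne : (Tuple.sort t) (0:Fin 6) ≠ (Tuple.sort t) (5:Fin 6) := fun hEq =>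
    absurd ((Equiv.injective _) hEq) (by decide)
  have h5 : |g 0 - g 5| < 5*π/3 := (hd _ _ hne).2
  rcases abs_cases (g 0 - g 5) with ⟨he, _⟩ | ⟨he, _⟩ <;> rw [he] at h5 <;> linarith

open Real Complex

lemma cos_ge_half (d : ℝ) (h2 : |d| < 2*π) (hd : |d| ≤ π/3 ∨ 5*π/3 ≤ |d|) :
    1/2 ≤ Real.cos d := by
  have hpi := Real.pi_pos
  rw [← Real.cos_abs]
  rcases hd with hd | hd
  · calc (1:ℝ)/2 = Real.cos (π/3) := by rw [Real.cos_pi_div_three]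
    _ ≤ Real.cos |d| := Real.cos_le_cos_of_nonneg_of_le_pi (by positivity) (by linarith) hd
  · have : Real.cos |d| = Real.cos (2*π - |d|) := by
      rw [Real.cos_sub]; simp [Real.cos_two_pi, Real.sin_two_pi]
    rw [this]
    calc (1:ℝ)/2 = Real.cos (π/3) := by rw [Real.cos_pi_div_three]
    _ ≤ Real.cos (2*π - |d|) :=
      Real.cos_le_cos_of_nonneg_of_le_pi (by linarith) (by linarith) (by linarith)

lemma inner_eq_cos (z w : ℂ) (hz : z ≠ 0) (hw : w ≠ 0) :
    z.re * w.re + z.im * w.im = ‖z‖ * ‖w‖ * Real.cos (z.arg - w.arg) := by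
  have hz' : ‖z‖ ≠ 0 := norm_ne_zero_iff.mpr hz
  have hw' : ‖w‖ ≠ 0 := norm_ne_zero_iff.mpr hw
  have h1 : z.re = ‖z‖ * Real.cos z.arg := by
    rw [Complex.cos_arg hz]; field_simp
  have h2 : z.im = ‖z‖ * Real.sin z.arg := by
    rw [Complex.sin_arg]; field_simp
  have h3 : w.re = ‖w‖ * Real.cos w.arg := by
    rw [Complex.cos_arg hw]; field_simp
  have h4 : w.im = ‖w‖ * Real.sin w.arg := by
    rw [Complex.sin_arg]; field_simp
  rw [h1, h2, h3, h4, Real.cos_sub]; ring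

open Real Complex

/-- Among six points all within distance `2r` of a common point `c`, two of them
are within distance `2r` of each other. -/
theorem six_points_pigeonhole (r : ℝ) (hr : 0 < r)
    (c : EuclideanSpace ℝ (Fin 2)) (s : Fin 6 → EuclideanSpace ℝ (Fin 2))
    (h : ∀ i, dist c (s i) ≤ 2 * r) :
    ∃ j k : Fin 6, j ≠ k ∧ dist (s j) (s k) ≤ 2 * r := by
  by_contra hcon
  push_neg at hcon
  set z : Fin 6 → ℂ := fun i => ⟨s i 0 - c 0, s i 1 - c 1⟩ with hzdef
  have hdist : ∀ i, dist c (s i) = ‖z i‖ := by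
    intro i
    rw [EuclideanSpace.dist_eq, Complex.norm_def, Complex.normSq_apply]
    rw [Fin.sum_univ_two]
    congr 1
    simp only [hzdef, Real.dist_eq]
    rw [_root_.sq_abs, _root_.sq_abs]; ring
  have hdist2 : ∀ j k, dist (s j) (s k) = ‖z j - z k‖ := by
    intro j k
    rw [EuclideanSpace.dist_eq, Complex.norm_def, Complex.normSq_apply]
    rw [Fin.sum_univ_two]
    congr 1
    simp only [hzdef, Complex.sub_re, Complex.sub_im, Real.dist_eq]
    rw [_root_.sq_abs, _root_.sq_abs]; ring
  have hzne : ∀ i, z i ≠ 0 := by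
    intro i hz0
    have h1 : dist c (s i) = 0 := by rw [hdist i, hz0]; simp
    have hj : ∃ j : Fin 6, j ≠ i := by
      rcases eq_or_ne i 0 with rfl | hi
      · exact ⟨1, by decide⟩
      · exact ⟨0, Ne.symm hi⟩
    obtain ⟨j, hj⟩ := hj
    have := hcon i j (Ne.symm hj)
    have : dist (s i) (s j) ≤ 2 * r := by
      calc dist (s i) (s j) ≤ dist (s i) c + dist c (s j) := dist_triangle _ _ _
      _ = dist c (s j) := by rw [dist_comm, h1]; ring
      _ ≤ 2 * r := h j
    linarith
  set t : Fin 6 → ℝ := fun i => (z i).arg with htdef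
  -- key: if cos (t j - t k) ≥ 1/2 for j ≠ k, contradiction
  have key : ∀ j k : Fin 6, j ≠ k → ¬ (1/2 ≤ Real.cos (t j - t k)) := by
    intro j k hjk hcos
    have ha := h j
    have hb := h k
    rw [hdist] at ha hb
    have hinner := inner_eq_cos (z j) (z k) (hzne j) (hzne k)
    have hsq : ‖z j - z k‖ ^ 2
        = ‖z j‖ ^ 2 + ‖z k‖ ^ 2
          - 2 * ((z j).re * (z k).re + (z j).im * (z k).im) := by
      rw [Complex.sq_norm, Complex.sq_norm, Complex.sq_norm]
      simp only [Complex.normSq_apply, Complex.sub_re, Complex.sub_im]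
      ring
    have hgt := hcon j k hjk
    rw [hdist2] at hgt
    have ha0 : 0 ≤ ‖z j‖ := norm_nonneg _
    have hb0 : 0 ≤ ‖z k‖ := norm_nonneg _
    have hab : 0 ≤ ‖z j‖ * ‖z k‖ := mul_nonneg ha0 hb0
    nlinarith [mul_nonneg (sub_nonneg.2 ha) (sub_nonneg.2 hb),
      mul_le_mul_of_nonneg_left hcos hab, norm_nonneg (z j - z k)]
  have hbound : ∀ i j : Fin 6, i ≠ j → π/3 < |t i - t j| ∧ |t i - t j| < 5*π/3 := by
    intro i j hij
    have h2pi : |t i - t j| < 2*π := by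
      have h1 := Complex.arg_mem_Ioc (z i)
      have h2 := Complex.arg_mem_Ioc (z j)
      have hpi := Real.pi_pos
      rw [abs_sub_lt_iff]
      constructor <;> [skip; skip] <;>
        simp only [htdef] <;>
        obtain ⟨a1, a2⟩ := h1 <;> obtain ⟨b1, b2⟩ := h2 <;> linarith
    constructor
    · by_contra hle
      push_neg at hle
      exact key i j hij (cos_ge_half _ h2pi (Or.inl hle))
    · by_contra hle
      push_neg at hle
      exact key i j hij (cos_ge_half _ h2pi (Or.inr hle))
  exact pigeon6 t hbound
end

section
/- Let C be a disk of radius r in the plane and let S be a finite set of disks of radius r such that every disk in S intersects C and no two distinct disks in S intersect each other. Then |S| ≤ 5. (Two disks of radius r intersect iff the distance between their centers is at most 2r.) -/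
open Complex

/-- Law of cosines for complex numbers. -/
lemma abs_sub_sq_eq (z w : ℂ) :
    ‖z - w‖ ^ 2 = ‖z‖ ^ 2 + ‖w‖ ^ 2
      - 2 * ‖z‖ * ‖w‖ * Real.cos (z.arg - w.arg) := by
  have hz1 := Complex.norm_mul_cos_arg z
  have hz2 := Complex.norm_mul_sin_arg z
  have hw1 := Complex.norm_mul_cos_arg w
  have hw2 := Complex.norm_mul_sin_arg w
  have hz := Complex.sq_norm z
  have hw := Complex.sq_norm w
  have hzw := Complex.sq_norm (z - w)
  have hcz := Real.sin_sq_add_cos_sq (arg z)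
  have hcw := Real.sin_sq_add_cos_sq (arg w)
  rw [Real.cos_sub]
  simp only [Complex.normSq_apply, Complex.sub_re, Complex.sub_im] at hz hw hzw
  rw [← hz1, ← hz2, ← hw1, ← hw2] at hzw
  rw [hzw]
  linear_combination ‖z‖ ^ 2 * hcz + ‖w‖ ^ 2 * hcw

/-- If two points of norm at most `R` make an angle with cosine at least `1/2`
at the origin, then they are at distance at most `R`. -/
lemma abs_sub_le_of_cos (R : ℝ) (z w : ℂ) (hz : ‖z‖ ≤ R)
    (hw : ‖w‖ ≤ R) (hc : (1:ℝ)/2 ≤ Real.cos (z.arg - w.arg)) :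
    ‖z - w‖ ≤ R := by
  have h := abs_sub_sq_eq z w
  have h0z : 0 ≤ ‖z‖ := norm_nonneg z
  have h0w : 0 ≤ ‖w‖ := norm_nonneg w
  have h0 : 0 ≤ ‖z - w‖ := norm_nonneg _
  have hR : 0 ≤ R := le_trans h0z hz
  nlinarith [h, mul_nonneg h0z h0w]

/-- Cosine of the difference of two arguments is at least `1/2` if the difference
is small or close to `2π`. -/
lemma cos_ge_half_s1 {a b : ℝ} (ha : a ∈ Set.Ioc (-Real.pi) Real.pi)
    (hb : b ∈ Set.Ioc (-Real.pi) Real.pi)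
    (h : |a - b| ≤ Real.pi/3 ∨ 5*Real.pi/3 ≤ |a - b|) :
    (1:ℝ)/2 ≤ Real.cos (a - b) := by
  have hpi := Real.pi_pos
  have hcos : Real.cos (a-b) = Real.cos |a-b| := (Real.cos_abs (a-b)).symm
  rcases h with h | h
  · rw [hcos, ← Real.cos_pi_div_three]
    apply Real.cos_le_cos_of_nonneg_of_le_pi (by positivity) (by linarith) h
  · have h2 : |a - b| < 2 * Real.pi :=
      abs_sub_lt_iff.mpr ⟨by linarith [ha.2, hb.1], by linarith [hb.2, ha.1]⟩
    rw [hcos]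
    have h3 : Real.cos |a - b| = Real.cos (2*Real.pi - |a - b|) :=
      (Real.cos_two_pi_sub _).symm
    rw [h3, ← Real.cos_pi_div_three]
    exact Real.cos_le_cos_of_nonneg_of_le_pi (by linarith) (by linarith) (by linarith)

/-- If every disk of radius `r` (given by its center) in the finite set `S`
intersects the disk of radius `r` centered at `C`, and no two distinct disks of
`S` intersect each other, then `|S| ≤ 5`.  Two disks of radius `r` intersect iff
their centers are at distance at most `2r`. -/
theorem packing_five (r : ℝ) (hr : 0 < r) (C : EuclideanSpace ℝ (Fin 2))
    (S : Finset (EuclideanSpace ℝ (Fin 2)))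
    (hint : ∀ p ∈ S, dist p C ≤ 2 * r)
    (hdisj : ∀ p ∈ S, ∀ q ∈ S, p ≠ q → ¬ dist p q ≤ 2 * r) :
    S.card ≤ 5 := by
  by_contra hcard
  push_neg at hcard
  -- translate to ℂ
  set z : EuclideanSpace ℝ (Fin 2) → ℂ := fun p => ⟨p 0 - C 0, p 1 - C 1⟩ with hzdef
  have hdist : ∀ p q : EuclideanSpace ℝ (Fin 2), dist p q = ‖z p - z q‖ := by
    intro p q
    rw [EuclideanSpace.dist_eq, Complex.norm_def, Complex.normSq_apply]
    congr 1
    rw [Fin.sum_univ_two, Real.dist_eq, Real.dist_eq, _root_.sq_abs, _root_.sq_abs]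
    simp only [hzdef, Complex.sub_re, Complex.sub_im]
    ring
  have hdistC : ∀ p : EuclideanSpace ℝ (Fin 2), dist p C = ‖z p‖ := by
    intro p
    rw [hdist p C]
    have hC : z C = 0 := by simp [hzdef, Complex.ext_iff]
    rw [hC, sub_zero]
  -- arguments
  set f : EuclideanSpace ℝ (Fin 2) → ℝ := fun p => (z p).arg with hfdef
  have key : ∀ p ∈ S, ∀ q ∈ S, p ≠ q →
      Real.pi/3 < |f p - f q| ∧ |f p - f q| < 5*Real.pi/3 := by
    intro p hp q hq hpq
    have hd := hdisj p hp q hq hpq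
    rw [hdist] at hd
    have hp' := hint p hp; have hq' := hint q hq
    rw [hdistC] at hp' hq'
    by_contra hcon
    push_neg at hcon
    have : |f p - f q| ≤ Real.pi/3 ∨ 5*Real.pi/3 ≤ |f p - f q| := by
      rcases le_or_gt (|f p - f q|) (Real.pi/3) with h' | h'
      · exact Or.inl h'
      · exact Or.inr (hcon h')
    have hc := cos_ge_half_s1 (Complex.arg_mem_Ioc (z p)) (Complex.arg_mem_Ioc (z q)) this
    exact hd (abs_sub_le_of_cos (2*r) (z p) (z q) hp' hq' hc)
  -- f is injective on S
  have hfinj : Set.InjOn f S := by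
    intro p hp q hq hfe
    by_contra hpq
    have := (key p hp q hq hpq).1
    rw [hfe] at this
    simp at this
    linarith [Real.pi_pos]
  have hA : (S.image f).card = S.card := Finset.card_image_of_injOn hfinj
  obtain ⟨B, hBsub, hB6⟩ := Finset.exists_subset_card_eq (show 6 ≤ (S.image f).card by omega)
  set g := B.orderEmbOfFin hB6 with hgdef
  have hmem : ∀ i : Fin 6, ∃ p ∈ S, f p = g i := by
    intro i
    have := hBsub (B.orderEmbOfFin_mem hB6 i)
    simpa [Finset.mem_image] using this
  have hgap : ∀ i j : Fin 6, i < j → Real.pi/3 < g j - g i ∧ g j - g i < 5*Real.pi/3 := by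
    intro i j hij
    obtain ⟨p, hp, hfp⟩ := hmem i
    obtain ⟨q, hq, hfq⟩ := hmem j
    have hlt : g i < g j := (B.orderEmbOfFin hB6).strictMono hij
    have hpq : p ≠ q := by
      rintro rfl
      rw [hfp] at hfq
      exact absurd hfq (ne_of_lt hlt)
    have hk := key q hq p hp hpq.symm
    rw [hfp, hfq] at hk
    rw [abs_of_pos (by linarith)] at hk
    exact hk
  have h01 := hgap 0 1 (by decide)
  have h12 := hgap 1 2 (by decide)
  have h23 := hgap 2 3 (by decide)
  have h34 := hgap 3 4 (by decide)
  have h45 := hgap 4 5 (by decide)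
  have h05 := hgap 0 5 (by decide)
  linarith [h01.1, h12.1, h23.1, h34.1, h45.1, h05.2]
end

section
/- Let P : V → ℝ² be a map assigning points in the plane to vertices, and define a graph G on V where u and v are adjacent iff u ≠ v and dist(P u, P v) ≤ 2. Then G contains no induced subgraph isomorphic to K_{1,6}; equivalently, for every vertex v, every independent set contained in the neighborhood of v has size at most 5. -/
/-- Unit disk graph in the proximity model: vertices are mapped to points in the
plane and two distinct vertices are adjacent iff their points are at distance ≤ 2. -/
def unitDiskGraph {V : Type*} (P : V → EuclideanSpace ℝ (Fin 2)) : SimpleGraph V where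
  Adj u v := u ≠ v ∧ dist (P u) (P v) ≤ 2
  symm := by
    constructor
    intro u v h
    exact ⟨h.1.symm, by rw [dist_comm]; exact h.2⟩
  loopless := by
    constructor
    intro v h
    exact h.1 rfl

open Real in
/-- If all pairs of distinct elements of a finset of reals are more than `d` apart,
then the range is at least `(card - 1) * d`. -/
lemma udg_spread (d : ℝ) : ∀ n : ℕ, ∀ A : Finset ℝ, A.card = n → ∀ hA : A.Nonempty,
    (∀ a ∈ A, ∀ b ∈ A, a ≠ b → d < |a - b|) →
    ((n : ℝ) - 1) * d ≤ A.max' hA - A.min' hA := by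
  intro n
  induction n with
  | zero =>
    intro A hcard hA _
    exact absurd hcard (by simpa using Finset.card_ne_zero_of_mem hA.choose_spec)
  | succ n ih =>
    intro A hcard hA hsep
    rcases Nat.eq_zero_or_pos n with hn | hn
    · subst hn
      have := A.min'_le _ (A.max'_mem hA)
      push_cast; linarith
    · set m := A.min' hA with hm
      have hmA : m ∈ A := A.min'_mem hA
      set A' := A.erase m with hA'
      have hcard' : A'.card = n := by
        rw [hA', Finset.card_erase_of_mem hmA, hcard]; rfl
      have hA'ne : A'.Nonempty := Finset.card_pos.mp (by omega)
      have hIH := ih A' hcard' hA'ne (fun a ha b hb hab =>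
        hsep a (Finset.mem_of_mem_erase ha) b (Finset.mem_of_mem_erase hb) hab)
      have hmaxne : A.max' hA ≠ m := by
        intro h
        have hsub : A ⊆ {m} := fun a ha =>
          Finset.mem_singleton.mpr (le_antisymm (h ▸ A.le_max' a ha) (A.min'_le a ha))
        have := Finset.card_le_card hsub
        simp at this; omega
      have hmax : A'.max' hA'ne = A.max' hA := by
        apply le_antisymm
        · exact Finset.max'_le _ _ _ (fun a ha => A.le_max' a (Finset.mem_of_mem_erase ha))
        · exact Finset.le_max' _ _ (Finset.mem_erase.mpr ⟨hmaxne, A.max'_mem hA⟩)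
      have hmin : m + d ≤ A'.min' hA'ne := by
        have hmem := A'.min'_mem hA'ne
        have h1 : A'.min' hA'ne ∈ A := Finset.mem_of_mem_erase hmem
        have h2 : A'.min' hA'ne ≠ m := (Finset.mem_erase.mp hmem).1
        have h3 := A.min'_le _ h1
        have h4 := hsep _ h1 m hmA h2
        rw [abs_of_nonneg (by linarith)] at h4
        linarith
      push_cast
      push_cast at hIH
      rw [hmax] at hIH
      linarith

lemma udg_re_mul_conj (a b : ℂ) :
    (a * (starRingEnd ℂ) b).re = ‖a‖ * ‖b‖ * Real.cos (a.arg - b.arg) := by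
  rw [Real.cos_sub, Complex.mul_re, Complex.conj_re, Complex.conj_im,
    ← Complex.norm_mul_cos_arg a, ← Complex.norm_mul_sin_arg a,
    ← Complex.norm_mul_cos_arg b, ← Complex.norm_mul_sin_arg b]
  ring

lemma udg_key (a b : ℂ) (ha : ‖a‖ ≤ 2) (hb : ‖b‖ ≤ 2)
    (hcos : 1/2 ≤ Real.cos (a.arg - b.arg)) : ‖a - b‖ ≤ 2 := by
  have h1 : ‖a - b‖ ^ 2
      = ‖a‖ ^ 2 + ‖b‖ ^ 2 - 2 * (a * (starRingEnd ℂ) b).re := by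
    rw [Complex.sq_norm, Complex.sq_norm, Complex.sq_norm, Complex.normSq_sub]
  rw [udg_re_mul_conj] at h1
  have ha0 := norm_nonneg a
  have hb0 := norm_nonneg b
  have hab0 := norm_nonneg (a - b)
  have hcos1 : Real.cos (a.arg - b.arg) ≤ 1 := Real.cos_le_one _
  nlinarith [sq_nonneg (‖a - b‖ - 2), sq_nonneg (‖a‖ - ‖b‖),
    mul_nonneg ha0 hb0]

/-- A unit disk graph contains no induced `K_{1,6}`: for every vertex `v`, any
independent set contained in the neighborhood of `v` has size at most 5. -/
theorem unitDiskGraph_no_K16 {V : Type*} (P : V → EuclideanSpace ℝ (Fin 2))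
    (v : V) (s : Finset V)
    (hnbr : ∀ x ∈ s, (unitDiskGraph P).Adj v x)
    (hind : (↑s : Set V).Pairwise fun a b => ¬ (unitDiskGraph P).Adj a b) :
    s.card ≤ 5 := by
  classical
  by_contra hcard
  push_neg at hcard
  obtain ⟨t, hts, ht6⟩ := Finset.exists_subset_card_eq (show 6 ≤ s.card by omega)
  set e := Complex.isometryOfOrthonormal (EuclideanSpace.basisFun (Fin 2) ℝ) with he
  set c : V → ℂ := fun x => e.symm (P x - P v) with hc
  have hdist : ∀ x y : V, ‖c x - c y‖ = dist (P x) (P y) := by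
    intro x y
    have h1 : c x - c y = e.symm (P x - P y) := by
      simp only [hc, ← map_sub]
      congr 1
      abel
    rw [h1, e.symm.norm_map, dist_eq_norm]
  have habs : ∀ x ∈ t, ‖c x‖ ≤ 2 := by
    intro x hx
    have h1 : ‖c x‖ = dist (P x) (P v) := by
      rw [hc, e.symm.norm_map, dist_eq_norm]
    rw [h1, dist_comm]
    exact (hnbr x (hts hx)).2
  have hfar : ∀ x ∈ t, ∀ y ∈ t, x ≠ y → 2 < ‖c x - c y‖ := by
    intro x hx y hy hxy
    rw [hdist]
    by_contra hle
    push_neg at hle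
    exact hind (hts hx) (hts hy) hxy ⟨hxy, hle⟩
  -- find a pair with cos of arg difference at least 1/2
  have hpair : ∃ x ∈ t, ∃ y ∈ t, x ≠ y ∧
      1/2 ≤ Real.cos ((c x).arg - (c y).arg) := by
    by_cases hinj : Set.InjOn (fun x => (c x).arg) t
    · set A : Finset ℝ := t.image (fun x => (c x).arg) with hA
      have hAcard : A.card = 6 := by
        rw [hA, Finset.card_image_of_injOn hinj, ht6]
      have hAne : A.Nonempty := by
        rw [← Finset.card_pos, hAcard]; norm_num
      have hmemIoc : ∀ a ∈ A, a ∈ Set.Ioc (-Real.pi) Real.pi := by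
        intro a ha
        obtain ⟨x, _, rfl⟩ := Finset.mem_image.mp ha
        exact ⟨Complex.neg_pi_lt_arg _, Complex.arg_le_pi _⟩
    -- either all gaps big, or small gap exists
      by_cases hgap : ∀ a ∈ A, ∀ b ∈ A, a ≠ b → Real.pi / 3 < |a - b|
      · have hspread := udg_spread (Real.pi / 3) 6 A hAcard hAne hgap
        set M := A.max' hAne
        set m := A.min' hAne
        obtain ⟨x, hx, hxM⟩ := Finset.mem_image.mp (A.max'_mem hAne)
        obtain ⟨y, hy, hym⟩ := Finset.mem_image.mp (A.min'_mem hAne)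
        have hMIoc := hmemIoc M (A.max'_mem hAne)
        have hmIoc := hmemIoc m (A.min'_mem hAne)
        have h53 : 5 * (Real.pi / 3) ≤ M - m := by push_cast at hspread; linarith
        have hlt : M - m < 2 * Real.pi := by
          have := hMIoc.2; have := hmIoc.1; linarith
        have hxy : x ≠ y := by
          intro h; subst h
          rw [hxM] at hym
          have hpi := Real.pi_pos
          linarith [h53, hym.le, hym.ge]
        refine ⟨x, hx, y, hy, hxy, ?_⟩
        rw [hxM, hym, ← Real.cos_two_pi_sub]
        calc (1:ℝ)/2 = Real.cos (Real.pi / 3) := (Real.cos_pi_div_three).symm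
          _ ≤ Real.cos (2 * Real.pi - (M - m)) := by
              apply Real.cos_le_cos_of_nonneg_of_le_pi
              · linarith
              · linarith [Real.pi_pos]
              · linarith [Real.pi_pos]
      · push_neg at hgap
        obtain ⟨a, ha, b, hb, hab, hle⟩ := hgap
        obtain ⟨x, hx, rfl⟩ := Finset.mem_image.mp ha
        obtain ⟨y, hy, rfl⟩ := Finset.mem_image.mp hb
        have hxy : x ≠ y := fun h => hab (by rw [h])
        refine ⟨x, hx, y, hy, hxy, ?_⟩
        rw [← Real.cos_abs]
        calc (1:ℝ)/2 = Real.cos (Real.pi / 3) := (Real.cos_pi_div_three).symm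
          _ ≤ Real.cos |(c x).arg - (c y).arg| := by
              apply Real.cos_le_cos_of_nonneg_of_le_pi (abs_nonneg _)
              · linarith [Real.pi_pos]
              · exact hle
    · rw [Set.InjOn] at hinj
      push_neg at hinj
      obtain ⟨x, hx, y, hy, heq, hxy⟩ := hinj
      refine ⟨x, Finset.mem_coe.mp hx, y, Finset.mem_coe.mp hy, hxy, ?_⟩
      simp only [heq, sub_self, Real.cos_zero]
      norm_num
  obtain ⟨x, hx, y, hy, hxy, hcos⟩ := hpair
  have := udg_key (c x) (c y) (habs x hx) (habs y hy) hcos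
  linarith [hfar x hx y hy hxy]
end

section
/- Let P : V → ℝ² define a unit disk graph G (u ~ v iff u ≠ v and dist(P u, P v) ≤ 2), and let v be a vertex such that (P v).x is minimal among all vertices. Then every independent set contained in the neighborhood N(v) has size at most 3. -/
private noncomputable def udgSec (a b : ℝ) : Fin 3 :=
  if 3*b^2 ≤ a^2 then 0 else if 0 ≤ b then 1 else 2

private lemma sector_top (a b c d : ℝ) (h1 : a^2+b^2 ≤ 4) (h2 : c^2+d^2 ≤ 4)
    (hb : 0 ≤ b) (hd : 0 ≤ d) (s1 : a^2 ≤ 3*b^2) (s2 : c^2 ≤ 3*d^2)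
    (ha : 0 ≤ a) (hc : 0 ≤ c) :
    (a-c)^2+(b-d)^2 ≤ 4 := by
  nlinarith [sq_nonneg (a-c), sq_nonneg (b-d), sq_nonneg (a*d-b*c), mul_nonneg hb hd,
    mul_nonneg ha hc]

private lemma sector_mid (a b c d : ℝ) (ha : 0 ≤ a) (hc : 0 ≤ c)
    (h1 : a^2+b^2 ≤ 4) (h2 : c^2+d^2 ≤ 4)
    (s1 : 3*b^2 ≤ a^2) (s2 : 3*d^2 ≤ c^2) :
    (a-c)^2+(b-d)^2 ≤ 4 := by
  have h3 : 0 ≤ a*c + 3*b*d := by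
    nlinarith [mul_nonneg ha hc, sq_nonneg (a*c+3*b*d),
      mul_nonneg (sub_nonneg.2 s1) (sub_nonneg.2 s2)]
  have h4 : 0 ≤ a*c + b*d := by nlinarith [mul_nonneg ha hc]
  have key : (a^2+b^2)*(c^2+d^2) ≤ 4*(a*c+b*d)^2 := by
    nlinarith [mul_nonneg (sub_nonneg.2 s1) (sub_nonneg.2 s2),
      mul_nonneg (mul_nonneg ha hc) h3]
  nlinarith [key, h4, sq_nonneg (a*c+b*d), mul_nonneg (sub_nonneg.2 h1) (sub_nonneg.2 h2),
    sq_nonneg (a^2+b^2-c^2-d^2)]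

private lemma sector_dist (a b c d : ℝ) (ha : 0 ≤ a) (hc : 0 ≤ c)
    (h1 : a^2+b^2 ≤ 4) (h2 : c^2+d^2 ≤ 4) (h : udgSec a b = udgSec c d) :
    (a-c)^2+(b-d)^2 ≤ 4 := by
  unfold udgSec at h
  split_ifs at h
  all_goals try exact absurd h (by decide)
  · rename_i q1 q2
    exact sector_mid a b c d ha hc h1 h2 q1 q2
  · rename_i q1 q2 q3 q4
    exact sector_top a b c d h1 h2 q2 q4 (le_of_not_ge q1) (le_of_not_ge q3) ha hc
  · rename_i q1 q2 q3 q4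
    have := sector_top a (-b) c (-d) (by nlinarith) (by nlinarith)
      (by push_neg at q2; linarith) (by push_neg at q4; linarith)
      (by nlinarith [le_of_not_ge q1]) (by nlinarith [le_of_not_ge q3]) ha hc
    nlinarith [this]

/-- If `v` is a vertex of a unit disk graph whose point has minimal
`x`-coordinate, then every independent set contained in the neighborhood of `v`
has size at most 3. -/
theorem unitDiskGraph_leftmost_indep_le_three {V : Type*}
    (P : V → EuclideanSpace ℝ (Fin 2)) (v : V)
    (hmin : ∀ u : V, P v 0 ≤ P u 0) (s : Finset V)
    (hnbr : ∀ x ∈ s, (unitDiskGraph P).Adj v x)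
    (hind : (↑s : Set V).Pairwise fun a b => ¬ (unitDiskGraph P).Adj a b) :
    s.card ≤ 3 := by
  by_contra hcard
  push_neg at hcard
  have hdist : ∀ u ∈ s, (P u 0 - P v 0)^2 + (P u 1 - P v 1)^2 ≤ 4 := by
    intro u hu
    have h := (hnbr u hu).2
    have h2 : dist (P v) (P u) ^ 2 ≤ 4 := by nlinarith [dist_nonneg (x := P v) (y := P u)]
    rw [EuclideanSpace.dist_eq, Real.sq_sqrt (by positivity)] at h2
    simp only [Fin.sum_univ_two, Real.dist_eq, sq_abs] at h2
    nlinarith [h2]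
  obtain ⟨x, hx, y, hy, hxy, hfxy⟩ :=
    Finset.exists_ne_map_eq_of_card_lt_of_maps_to
      (t := (Finset.univ : Finset (Fin 3))) (by simpa using hcard)
      (fun u _ => Finset.mem_univ (udgSec (P u 0 - P v 0) (P u 1 - P v 1)))
  apply hind hx hy hxy
  refine ⟨hxy, ?_⟩
  rw [EuclideanSpace.dist_eq]
  rw [show (2:ℝ) = Real.sqrt 4 by rw [show (4:ℝ) = 2^2 by norm_num, Real.sqrt_sq (by norm_num)]]
  apply Real.sqrt_le_sqrt
  simp only [Fin.sum_univ_two, Real.dist_eq, sq_abs]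
  have hgoal := sector_dist (P x 0 - P v 0) (P x 1 - P v 1) (P y 0 - P v 0) (P y 1 - P v 1)
    (sub_nonneg.2 (hmin x)) (sub_nonneg.2 (hmin y)) (hdist x hx) (hdist y hy) hfxy
  nlinarith [hgoal]
end

section
/- Let G be a finite unit disk graph (given by a proximity model P : V → ℝ², adjacency iff distance ≤ 2) with maximum degree Δ. Then G contains a clique of size at least ⌈Δ/6⌉ + 1. -/
open Complex Real

open Complex Real

noncomputable def cpt (P : EuclideanSpace ℝ (Fin 2)) : ℂ := ⟨P 0, P 1⟩

lemma dist_cpt (x y : EuclideanSpace ℝ (Fin 2)) :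
    dist x y = ‖cpt x - cpt y‖ := by
  rw [EuclideanSpace.dist_eq, Complex.norm_def, Complex.normSq_apply]
  simp only [cpt, Fin.sum_univ_two, Real.dist_eq, Complex.sub_re, Complex.sub_im]
  congr 1
  rw [_root_.sq_abs, _root_.sq_abs]; ring

/-- sector index of a complex number -/
noncomputable def sector (z : ℂ) : ℕ := min 5 (⌊(z.arg + π) / (π/3)⌋.toNat)

lemma sector_bounds (z : ℂ) :
    (sector z : ℝ) * (π/3) ≤ z.arg + π ∧ z.arg + π ≤ (sector z + 1) * (π/3) := by
  have hπ : (0:ℝ) < π/3 := by positivity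
  have h1 : -π < z.arg := Complex.neg_pi_lt_arg z
  have h2 : z.arg ≤ π := Complex.arg_le_pi z
  set t : ℝ := (z.arg + π) / (π/3) with ht
  have hts : z.arg + π = t * (π/3) := by rw [ht, div_mul_cancel₀ _ hπ.ne']
  have ht0 : 0 < t := by apply div_pos <;> linarith
  have ht6 : t ≤ 6 := by rw [div_le_iff₀ hπ]; linarith
  have hfl0 : 0 ≤ ⌊t⌋ := Int.le_floor.2 (by exact_mod_cast ht0.le)
  rcases le_or_gt ⌊t⌋ 5 with h5 | h5
  · have hsec : (sector z : ℤ) = ⌊t⌋ := by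
      simp only [sector, ← ht]
      omega
    have hsec' : (sector z : ℝ) = (⌊t⌋ : ℝ) := by exact_mod_cast hsec
    constructor
    · rw [hsec', hts]
      nlinarith [Int.floor_le t]
    · rw [hsec', hts]
      nlinarith [Int.lt_floor_add_one t]
  · have hsec : sector z = 5 := by simp only [sector, ← ht]; omega
    have ht6' : (6:ℝ) ≤ t := by
      have := Int.floor_le t
      have : (6:ℝ) ≤ (⌊t⌋:ℝ) := by exact_mod_cast h5
      linarith [Int.floor_le t]
    have : t = 6 := le_antisymm ht6 ht6'
    rw [hsec, hts, this]
    constructor <;> nlinarith [hπ]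

lemma key (a b : ℂ) (ha : ‖a‖ ≤ 2) (hb : ‖b‖ ≤ 2)
    (hang : |a.arg - b.arg| ≤ π/3) : ‖a - b‖ ≤ 2 := by
  have hcos : Real.cos (π/3) ≤ Real.cos (a.arg - b.arg) := by
    rw [← Real.cos_abs (a.arg - b.arg)]
    apply Real.cos_le_cos_of_nonneg_of_le_pi (abs_nonneg _) _ hang
    linarith [Real.pi_pos]
  rw [Real.cos_pi_div_three] at hcos
  have hre : ‖a‖ * ‖b‖ * Real.cos (a.arg - b.arg)
      = a.re * b.re + a.im * b.im := by
    rw [Real.cos_sub]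
    have h1 := Complex.norm_mul_cos_arg a
    have h2 := Complex.norm_mul_sin_arg a
    have h3 := Complex.norm_mul_cos_arg b
    have h4 := Complex.norm_mul_sin_arg b
    rw [← h1, ← h2, ← h3, ← h4]; ring
  have hns : Complex.normSq (a - b) ≤ 4 := by
    have h := Complex.normSq_apply (a - b)
    have hna : Complex.normSq a = a.re^2 + a.im^2 := by rw [Complex.normSq_apply]; ring
    have ha2 : Complex.normSq a = ‖a‖^2 := (Complex.sq_norm a).symm
    have hb2 : Complex.normSq b = ‖b‖^2 := (Complex.sq_norm b).symm
    have h0a : 0 ≤ ‖a‖ := norm_nonneg a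
    have h0b : 0 ≤ ‖b‖ := norm_nonneg b
    have hrege : ‖a‖ * ‖b‖ * (1/2) ≤ a.re * b.re + a.im * b.im := by
      rw [← hre]
      have := mul_nonneg h0a h0b
      nlinarith
    simp only [Complex.normSq_apply, Complex.sub_re, Complex.sub_im] at *
    nlinarith
  calc ‖a - b‖ = Real.sqrt (Complex.normSq (a-b)) := by rw [Complex.norm_def]
    _ ≤ Real.sqrt 4 := Real.sqrt_le_sqrt hns
    _ = 2 := by rw [show (4:ℝ) = 2^2 by norm_num, Real.sqrt_sq]; norm_num

lemma sector_lt(z : ℂ) : sector z < 6 := by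
  have := min_le_left 5 (⌊(z.arg + π) / (π/3)⌋.toNat); unfold sector; omega

open scoped Classical in
/-- A finite unit disk graph with maximum degree `Δ` contains a clique of size
at least `⌈Δ/6⌉ + 1` (here `(Δ + 5) / 6 = ⌈Δ/6⌉` in natural number arithmetic). -/
theorem unitDiskGraph_clique_of_maxDegree {V : Type*} [Fintype V] [Nonempty V]
    (P : V → EuclideanSpace ℝ (Fin 2)) :
    ∃ s : Finset V, (unitDiskGraph P).IsClique ↑s ∧
      ((unitDiskGraph P).maxDegree + 5) / 6 + 1 ≤ s.card := by
  set G := unitDiskGraph P with hG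
  obtain ⟨v, hv⟩ := G.exists_maximal_degree_vertex
  set k := (G.maxDegree + 5) / 6 with hk
  rcases Nat.eq_zero_or_pos k with hk0 | hkpos
  · refine ⟨{v}, ?_, by simp [hk0]⟩
    simp [SimpleGraph.isClique_iff, Set.Pairwise]
  · have h6k : k * 6 ≤ G.maxDegree + 5 := Nat.div_mul_le_self _ _
    set f : V → Fin 6 := fun u => ⟨sector (cpt (P u) - cpt (P v)), sector_lt _⟩ with hf
    have hpig : (Finset.univ : Finset (Fin 6)).card * (k - 1) < (G.neighborFinset v).card := by
      rw [G.card_neighborFinset_eq_degree, ← hv, Finset.card_univ]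
      simp only [Fintype.card_fin]
      omega
    obtain ⟨i, -, hi⟩ := Finset.exists_lt_card_fiber_of_mul_lt_card_of_maps_to
      (fun a _ => Finset.mem_univ (f a)) hpig
    set fib := (G.neighborFinset v).filter (fun u => f u = i) with hfib
    have hvfib : v ∉ fib := fun h => G.notMem_neighborFinset_self v (Finset.mem_filter.1 h).1
    have hsub : ∀ u ∈ fib, G.Adj v u := fun u hu =>
      (G.mem_neighborFinset v u).1 (Finset.mem_filter.1 hu).1
    refine ⟨insert v fib, ?_, ?_⟩
    · intro a ha b hb hab
      simp only [Finset.coe_insert, Set.mem_insert_iff, Finset.mem_coe] at ha hb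
      rcases ha with rfl | ha
      · rcases hb with rfl | hb
        · exact absurd rfl hab
        · exact hsub b hb
      · rcases hb with rfl | hb
        · exact (hsub a ha).symm
        · -- both in fib
          refine ⟨hab, ?_⟩
          set za := cpt (P a) - cpt (P v) with hza
          set zb := cpt (P b) - cpt (P v) with hzb
          have hda : ‖za‖ ≤ 2 := by
            rw [← dist_cpt]; rw [dist_comm]; exact (hsub a ha).2
          have hdb : ‖zb‖ ≤ 2 := by
            rw [← dist_cpt]; rw [dist_comm]; exact (hsub b hb).2
          have hsec : sector za = sector zb := by
            have h1 := (Finset.mem_filter.1 ha).2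
            have h2 := (Finset.mem_filter.1 hb).2
            have : f a = f b := h1.trans h2.symm
            simpa [hf, Fin.ext_iff] using this
          have hang : |za.arg - zb.arg| ≤ π/3 := by
            obtain ⟨l1, u1⟩ := sector_bounds za
            obtain ⟨l2, u2⟩ := sector_bounds zb
            rw [hsec] at l1 u1
            rw [abs_sub_le_iff]
            constructor <;> nlinarith [Real.pi_pos]
          have := key za zb hda hdb hang
          rw [dist_cpt]
          convert this using 2
          rw [hza, hzb]; ring
    · rw [Finset.card_insert_of_notMem hvfib]
      omega
end

section
/- Every finite triangle-free unit disk graph (given by a proximity model P : V → ℝ² with adjacency threshold 2) has a vertex of degree at most 3. -/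
open Real

lemma euclid_dist_eq (x y : EuclideanSpace ℝ (Fin 2)) :
    dist x y = Real.sqrt ((x 0 - y 0)^2 + (x 1 - y 1)^2) := by
  rw [EuclideanSpace.dist_eq]
  simp [Fin.sum_univ_two, Real.dist_eq, sq_abs]

lemma abs_mk_eq (a b : ℝ) : ‖(⟨a, b⟩ : ℂ)‖ = Real.sqrt (a^2 + b^2) := by
  rw [Complex.norm_def, Complex.normSq_mk]
  ring_nf

lemma dist_le_of_arg_close (z w : ℂ) (hz : ‖z‖ ≤ 2) (hw : ‖w‖ ≤ 2)
    (h : |z.arg - w.arg| ≤ π / 3) : ‖z - w‖ ≤ 2 := by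
  rcases eq_or_ne z 0 with rfl | hz0
  · simpa using hw
  rcases eq_or_ne w 0 with rfl | hw0
  · simpa using hz
  have hcos : (1:ℝ)/2 ≤ Real.cos (z.arg - w.arg) := by
    rw [← Real.cos_abs]
    have h1 := Real.cos_le_cos_of_nonneg_of_le_pi (abs_nonneg (z.arg - w.arg))
      (by linarith [Real.pi_pos] : (π/3:ℝ) ≤ π) h
    rw [Real.cos_pi_div_three] at h1
    linarith
  rw [Real.cos_sub] at hcos
  have hc1 := Complex.cos_arg hz0
  have hs1 := Complex.sin_arg z
  have hc2 := Complex.cos_arg hw0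
  have hs2 := Complex.sin_arg w
  have haz : (0:ℝ) < ‖z‖ := norm_pos_iff.mpr hz0
  have haw : (0:ℝ) < ‖w‖ := norm_pos_iff.mpr hw0
  have hre1 : z.re = ‖z‖ * Real.cos z.arg := by rw [hc1]; field_simp
  have him1 : z.im = ‖z‖ * Real.sin z.arg := by rw [hs1]; field_simp
  have hre2 : w.re = ‖w‖ * Real.cos w.arg := by rw [hc2]; field_simp
  have him2 : w.im = ‖w‖ * Real.sin w.arg := by rw [hs2]; field_simp
  have hsq : (‖z - w‖)^2 = (z.re - w.re)^2 + (z.im - w.im)^2 := by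
    rw [Complex.sq_norm, Complex.normSq_apply, Complex.sub_re, Complex.sub_im]; ring
  have key : (‖z - w‖)^2 ≤ 4 := by
    rw [hsq, hre1, him1, hre2, him2]
    have p1 : Real.sin z.arg ^ 2 + Real.cos z.arg ^ 2 = 1 := Real.sin_sq_add_cos_sq _
    have p2 : Real.sin w.arg ^ 2 + Real.cos w.arg ^ 2 = 1 := Real.sin_sq_add_cos_sq _
    have expand : (‖z‖ * Real.cos z.arg - ‖w‖ * Real.cos w.arg) ^ 2 +
        (‖z‖ * Real.sin z.arg - ‖w‖ * Real.sin w.arg) ^ 2 =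
        (‖z‖)^2 * (Real.sin z.arg ^ 2 + Real.cos z.arg ^ 2) +
        (‖w‖)^2 * (Real.sin w.arg ^ 2 + Real.cos w.arg ^ 2) -
        2 * ‖z‖ * ‖w‖ *
          (Real.cos z.arg * Real.cos w.arg + Real.sin z.arg * Real.sin w.arg) := by ring
    rw [expand, p1, p2]
    nlinarith [mul_nonneg (mul_nonneg haz.le haw.le)
      (by linarith : (0:ℝ) ≤ Real.cos z.arg * Real.cos w.arg + Real.sin z.arg * Real.sin w.arg - 1/2),
      mul_nonneg haz.le (by linarith : (0:ℝ) ≤ 2 - ‖z‖),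
      mul_nonneg haw.le (by linarith : (0:ℝ) ≤ 2 - ‖w‖),
      mul_nonneg (by linarith : (0:ℝ) ≤ 2 - ‖z‖) (by linarith : (0:ℝ) ≤ 2 - ‖w‖)]
  nlinarith [norm_nonneg (z - w)]

lemma bucket_close (a b : ℝ) (ha : |a| ≤ π/2) (hb : |b| ≤ π/2)
    (h : (if a ≤ -(π/6) then (0:Fin 3) else if a ≤ π/6 then 1 else 2)
       = (if b ≤ -(π/6) then (0:Fin 3) else if b ≤ π/6 then 1 else 2)) :
    |a - b| ≤ π/3 := by
  rw [abs_le] at ha hb ⊢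
  obtain ⟨ha1, ha2⟩ := ha
  obtain ⟨hb1, hb2⟩ := hb
  split_ifs at h <;> first
    | (constructor <;> linarith)
    | simp_all

open scoped Classical in
/-- Every finite triangle-free unit disk graph has a vertex of degree at most 3. -/
theorem triangleFree_unitDiskGraph_min_degree {V : Type*} [Fintype V] [Nonempty V]
    (P : V → EuclideanSpace ℝ (Fin 2))
    (htf : (unitDiskGraph P).CliqueFree 3) :
    ∃ v : V, (unitDiskGraph P).degree v ≤ 3 := by
  by_contra hcon
  push_neg at hcon
  obtain ⟨v, -, hv⟩ := Finset.exists_min_image Finset.univ (fun v => (P v) 0)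
    ⟨Classical.arbitrary V, Finset.mem_univ _⟩
  set G := unitDiskGraph P
  set z : V → ℂ := fun u => ⟨(P u) 0 - (P v) 0, (P u) 1 - (P v) 1⟩ with hz
  have hdist : ∀ u w : V, dist (P u) (P w) = ‖z u - z w‖ := by
    intro u w
    rw [euclid_dist_eq]
    have : z u - z w = ⟨(P u) 0 - (P w) 0, (P u) 1 - (P w) 1⟩ := by
      simp only [hz, Complex.ext_iff, Complex.sub_re, Complex.sub_im]
      constructor <;> ring
    rw [this, abs_mk_eq]
  have habs : ∀ u ∈ G.neighborFinset v, ‖z u‖ ≤ 2 := by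
    intro u hu
    rw [SimpleGraph.mem_neighborFinset] at hu
    have := hu.2
    rw [dist_comm, hdist u v] at this
    have hzv : z v = 0 := by simp [hz, Complex.ext_iff]
    rwa [hzv, sub_zero] at this
  have harg : ∀ u ∈ G.neighborFinset v, |(z u).arg| ≤ π/2 := by
    intro u hu
    rw [Complex.abs_arg_le_pi_div_two_iff]
    have : (P v) 0 ≤ (P u) 0 := hv u (Finset.mem_univ u)
    simpa [hz] using this
  have hcard : (Finset.univ : Finset (Fin 3)).card < (G.neighborFinset v).card := by
    simp only [Finset.card_univ, Fintype.card_fin]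
    rw [SimpleGraph.card_neighborFinset_eq_degree]
    exact hcon v
  obtain ⟨u, hu, w, hw, huw, hfeq⟩ := Finset.exists_ne_map_eq_of_card_lt_of_maps_to hcard
    (f := fun u => if (z u).arg ≤ -(π/6) then (0:Fin 3) else if (z u).arg ≤ π/6 then 1 else 2)
    (fun a _ => Finset.mem_univ _)
  have hclose : |(z u).arg - (z w).arg| ≤ π/3 :=
    bucket_close _ _ (harg u hu) (harg w hw) hfeq
  have hd : dist (P u) (P w) ≤ 2 := by
    rw [hdist u w]
    exact dist_le_of_arg_close _ _ (habs u hu) (habs w hw) hclose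
  rw [SimpleGraph.mem_neighborFinset] at hu hw
  exact htf {v, u, w} ((SimpleGraph.is3Clique_triple_iff).2 ⟨hu, hw, ⟨huw, hd⟩⟩)
end

section
/- Every finite triangle-free unit disk graph (proximity model in ℝ² with adjacency threshold 2) admits a proper vertex coloring with 4 colors; i.e., its chromatic number is at most 4. -/
open Complex Real

noncomputable def toC (p : EuclideanSpace ℝ (Fin 2)) : ℂ := (p 0 : ℂ) + (p 1 : ℝ) * Complex.I

lemma abs_toC_sub (x y : EuclideanSpace ℝ (Fin 2)) :
    ‖toC x - toC y‖ = dist x y := by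
  rw [EuclideanSpace.dist_eq, Complex.norm_def, Complex.normSq_apply]
  simp [toC, Real.dist_eq, Fin.sum_univ_two, sq_abs, Complex.sub_re, Complex.sub_im]
  ring_nf

lemma core_pair (z w : ℂ) (hz2 : ‖z‖ ≤ 2) (hw2 : ‖w‖ ≤ 2)
    (hang : |Complex.arg z - Complex.arg w| ≤ π/3) : ‖z - w‖ ≤ 2 := by
  have hcz := Complex.norm_mul_cos_add_sin_mul_I z
  have hcw := Complex.norm_mul_cos_add_sin_mul_I w
  have hrez : z.re = ‖z‖ * Real.cos z.arg := by
    have := congrArg Complex.re hcz; simpa using this.symm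
  have himz : z.im = ‖z‖ * Real.sin z.arg := by
    have := congrArg Complex.im hcz; simpa using this.symm
  have hrew : w.re = ‖w‖ * Real.cos w.arg := by
    have := congrArg Complex.re hcw; simpa using this.symm
  have himw : w.im = ‖w‖ * Real.sin w.arg := by
    have := congrArg Complex.im hcw; simpa using this.symm
  have hcos : (1:ℝ)/2 ≤ Real.cos (z.arg - w.arg) := by
    have h1 : Real.cos |z.arg - w.arg| ≥ Real.cos (π/3) :=
      Real.cos_le_cos_of_nonneg_of_le_pi (abs_nonneg _) (by linarith [Real.pi_pos]) hang
    rw [Real.cos_abs, Real.cos_pi_div_three] at h1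
    linarith
  have hsq : (‖z - w‖)^2 = (z.re - w.re)^2 + (z.im - w.im)^2 := by
    rw [Complex.sq_norm, Complex.normSq_apply, Complex.sub_re, Complex.sub_im]; ring
  have hcs : Real.cos (z.arg - w.arg)
      = Real.cos z.arg * Real.cos w.arg + Real.sin z.arg * Real.sin w.arg := Real.cos_sub _ _
  have hz0 : 0 ≤ ‖z‖ := norm_nonneg z
  have hw0 : 0 ≤ ‖w‖ := norm_nonneg w
  have hzw0 : 0 ≤ ‖z - w‖ := norm_nonneg _
  have hszc := Real.sin_sq_add_cos_sq z.arg
  have hswc := Real.sin_sq_add_cos_sq w.arg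
  have key : (‖z-w‖)^2 ≤ 4 := by
    rw [hsq, hrez, himz, hrew, himw]
    nlinarith [hcs, hszc, hswc, hcos, mul_nonneg hz0 hw0,
      mul_nonneg (sub_nonneg.2 hz2) hz0, mul_nonneg (sub_nonneg.2 hw2) hw0,
      mul_nonneg (sub_nonneg.2 hz2) (sub_nonneg.2 hw2),
      mul_nonneg (mul_nonneg hz0 hw0) (by linarith : (0:ℝ) ≤ Real.cos (z.arg-w.arg) - 1/2)]
  nlinarith [key, hzw0]

lemma pigeon (θ : Fin 4 → ℝ) (h : ∀ i, |θ i| ≤ π/2) :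
    ∃ i j, i ≠ j ∧ |θ i - θ j| ≤ π/3 := by
  have hπ := Real.pi_pos
  set g : Fin 4 → Fin 3 := fun i => if θ i ≤ -(π/6) then 0 else if θ i ≤ π/6 then 1 else 2 with hg
  obtain ⟨i, j, hne, heq⟩ := Fintype.exists_ne_map_eq_of_card_lt g (by simp)
  refine ⟨i, j, hne, ?_⟩
  have hi := abs_le.mp (h i)
  have hj := abs_le.mp (h j)
  rw [abs_sub_le_iff]
  simp only [hg] at heq
  split_ifs at heq with h1 h2 h3 h4 h5 h6 <;>
    first
      | (constructor <;> linarith)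
      | (exfalso; exact absurd heq (by decide))
      | skip
  all_goals push_neg at * <;> constructor <;> linarith

lemma deg_le_three {V : Type*} [DecidableEq V] (P : V → EuclideanSpace ℝ (Fin 2))
    [DecidableRel (unitDiskGraph P).Adj]
    (htf : (unitDiskGraph P).CliqueFree 3) (s : Finset V) (v : V)
    (hmin : ∀ u ∈ s, P v 0 ≤ P u 0) :
    (s.filter (fun u => (unitDiskGraph P).Adj v u)).card ≤ 3 := by
  by_contra hcon
  push_neg at hcon
  obtain ⟨t, hts, ht4⟩ := Finset.exists_subset_card_eq (n := 4) hcon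
  have e := t.equivFinOfCardEq ht4
  set q : Fin 4 → V := fun i => ((e.symm i : t) : V) with hq
  have hqmem : ∀ i, q i ∈ s ∧ (unitDiskGraph P).Adj v (q i) := by
    intro i
    have := hts (e.symm i).2
    exact Finset.mem_filter.mp this
  have hqinj : Function.Injective q := fun i j hij => by
    apply e.symm.injective; exact Subtype.ext hij
  set z : Fin 4 → ℂ := fun i => toC (P (q i)) - toC (P v) with hz
  have hre : ∀ i, 0 ≤ (z i).re := by
    intro i
    have h0 := hmin (q i) (hqmem i).1
    simp [hz, toC, Complex.sub_re]
    linarith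
  have habs : ∀ i, ‖z i‖ ≤ 2 := by
    intro i
    rw [hz]
    simp only []
    rw [abs_toC_sub]
    have := (hqmem i).2.2
    rwa [dist_comm]
  have harg : ∀ i, |(z i).arg| ≤ π/2 := fun i =>
    Complex.abs_arg_le_pi_div_two_iff.mpr (hre i)
  obtain ⟨i, j, hij, hang⟩ := pigeon (fun i => (z i).arg) harg
  have hdij : ‖z i - z j‖ ≤ 2 := core_pair _ _ (habs i) (habs j) hang
  have hzz : z i - z j = toC (P (q i)) - toC (P (q j)) := by rw [hz]; ring
  rw [hzz, abs_toC_sub] at hdij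
  have hadj : (unitDiskGraph P).Adj (q i) (q j) :=
    ⟨fun h => hij (hqinj h), hdij⟩
  exact htf {v, q i, q j} (SimpleGraph.is3Clique_triple_iff.mpr
    ⟨(hqmem i).2, (hqmem j).2, hadj⟩)

lemma greedy {V : Type*} [DecidableEq V] (G : SimpleGraph V) [DecidableRel G.Adj]
    (hdeg : ∀ s : Finset V, s.Nonempty → ∃ v ∈ s, (s.filter (fun u => G.Adj v u)).card ≤ 3) :
    ∀ s : Finset V, ∃ C : V → Fin 4, ∀ u ∈ s, ∀ w ∈ s, G.Adj u w → C u ≠ C w := by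
  intro s
  induction s using Finset.strongInduction with
  | _ s ih =>
    rcases s.eq_empty_or_nonempty with rfl | hne
    · exact ⟨fun _ => 0, by simp⟩
    obtain ⟨v, hv, hdv⟩ := hdeg s hne
    obtain ⟨C, hC⟩ := ih (s.erase v) (Finset.erase_ssubset hv)
    set N := (s.filter (fun u => G.Adj v u)) with hN
    obtain ⟨c, hc⟩ : ∃ c : Fin 4, c ∉ N.image C := by
      by_contra hall; push_neg at hall
      have huniv : N.image C = Finset.univ := Finset.eq_univ_iff_forall.mpr hall
      have hlt : (N.image C).card < Fintype.card (Fin 4) := by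
        have h2 : (N.image C).card ≤ N.card := Finset.card_image_le
        have h3 := hdv
        simp only [Fintype.card_fin]; omega
      rw [(N.image C).card_lt_iff_ne_univ] at hlt
      exact hlt huniv
    refine ⟨Function.update C v c, ?_⟩
    intro u hu w hw hadj
    by_cases huv : u = v <;> by_cases hwv : w = v
    · exfalso; rw [huv, hwv] at hadj; exact G.loopless.irrefl v hadj
    · rw [Function.update_apply, Function.update_apply, if_pos huv, if_neg hwv]
      rw [huv] at hadj
      intro hcw
      exact hc (hcw ▸ Finset.mem_image_of_mem C (Finset.mem_filter.mpr ⟨hw, hadj⟩))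
    · rw [Function.update_apply, Function.update_apply, if_pos hwv, if_neg huv]
      rw [hwv] at hadj
      intro hcw
      exact hc ((hcw.symm) ▸ Finset.mem_image_of_mem C (Finset.mem_filter.mpr ⟨hu, hadj.symm⟩))
    · rw [Function.update_apply, Function.update_apply, if_neg huv, if_neg hwv]
      exact hC u (Finset.mem_erase.mpr ⟨huv, hu⟩) w (Finset.mem_erase.mpr ⟨hwv, hw⟩) hadj

/-- Every finite triangle-free unit disk graph can be properly colored with 4
colors. -/
theorem triangleFree_unitDiskGraph_chromaticNumber_le_four {V : Type*} [Fintype V]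
    (P : V → EuclideanSpace ℝ (Fin 2))
    (htf : (unitDiskGraph P).CliqueFree 3) :
    (unitDiskGraph P).chromaticNumber ≤ 4 := by
  classical
  have hdeg : ∀ s : Finset V, s.Nonempty →
      ∃ v ∈ s, (s.filter (fun u => (unitDiskGraph P).Adj v u)).card ≤ 3 := by
    intro s hs
    obtain ⟨v, hv, hmin⟩ := s.exists_min_image (fun u => P u 0) hs
    exact ⟨v, hv, deg_le_three P htf s v hmin⟩
  obtain ⟨C, hC⟩ := greedy (unitDiskGraph P) hdeg Finset.univ
  have hcol : (unitDiskGraph P).Colorable 4 :=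
    ⟨SimpleGraph.Coloring.mk C fun {u w} hadj =>
      hC u (Finset.mem_univ u) w (Finset.mem_univ w) hadj⟩
  have := hcol.chromaticNumber_le
  exact_mod_cast this
end

section
/- Let G be a finite unit disk graph (proximity model in ℝ², threshold 2). Then the chromatic number of G is at most 6·ω(G) − 5, where ω(G) is the clique number; equivalently χ(G) ≤ Δ(G)+1 ≤ 6(ω(G)−1)+1. -/
open Real Complex

noncomputable def udgSector (z : ℂ) : ℤ := min 5 ⌊(Complex.arg z + Real.pi) / (Real.pi / 3)⌋

lemma udg_floor_bounds {u : ℝ} (h0 : 0 < u) (h6 : u ≤ 6) :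
    ((min 5 ⌊u⌋ : ℤ) : ℝ) ≤ u ∧ u ≤ ((min 5 ⌊u⌋ : ℤ) : ℝ) + 1 := by
  rcases le_or_gt ⌊u⌋ 5 with h | h
  · rw [min_eq_right h]
    exact ⟨Int.floor_le u, (Int.lt_floor_add_one u).le⟩
  · have h66 : ⌊u⌋ ≤ 6 := by
      have : (⌊u⌋ : ℝ) ≤ 6 := (Int.floor_le u).trans h6
      exact_mod_cast this
    have h6' : ⌊u⌋ = 6 := le_antisymm h66 h
    have hu6 : (6 : ℝ) ≤ u := by
      have := Int.floor_le u
      rw [h6'] at this; exact_mod_cast this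
    rw [min_eq_left (by omega)]
    norm_num; constructor <;> linarith

lemma udg_arg_bounds {z : ℂ} (hz : z ≠ 0) :
    ((udgSector z : ℝ)) ≤ (Complex.arg z + Real.pi) / (Real.pi / 3) ∧
    (Complex.arg z + Real.pi) / (Real.pi / 3) ≤ (udgSector z : ℝ) + 1 := by
  have hpi : (0 : ℝ) < Real.pi := Real.pi_pos
  apply udg_floor_bounds
  · have := Complex.neg_pi_lt_arg z
    have : 0 < Complex.arg z + Real.pi := by linarith
    positivity
  · have := Complex.arg_le_pi z
    rw [div_le_iff₀ (by positivity)]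
    linarith

/-- key geometric lemma -/
lemma udg_key_s10 {z w : ℂ} (hz : ‖z‖ ≤ 2) (hw : ‖w‖ ≤ 2)
    (h : udgSector z = udgSector w) : ‖z - w‖ ≤ 2 := by
  rcases eq_or_ne z 0 with rfl | hz0
  · simpa using hw
  rcases eq_or_ne w 0 with rfl | hw0
  · simpa using hz
  have hpi : (0 : ℝ) < Real.pi := Real.pi_pos
  obtain ⟨h1, h2⟩ := udg_arg_bounds hz0
  obtain ⟨h3, h4⟩ := udg_arg_bounds hw0
  rw [h] at h1 h2
  -- |arg z - arg w| ≤ π/3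
  have harg : |Complex.arg z - Complex.arg w| ≤ Real.pi / 3 := by
    rw [abs_le]
    constructor
    · have := sub_le_sub h1 h4
      rw [div_sub_div_same, le_div_iff₀ (by positivity)] at this
      nlinarith
    · have := sub_le_sub h3 h2
      rw [div_sub_div_same, le_div_iff₀ (by positivity)] at this
      nlinarith
  have hcos : (1:ℝ)/2 ≤ Real.cos (Complex.arg z - Complex.arg w) := by
    rw [← Real.cos_abs]
    have h3' : |Complex.arg z - Complex.arg w| ≤ Real.pi := by
      have := Real.pi_gt_three
      linarith [abs_le.mp harg]
    calc (1:ℝ)/2 = Real.cos (Real.pi/3) := by rw [Real.cos_pi_div_three]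
    _ ≤ _ := Real.cos_le_cos_of_nonneg_of_le_pi (abs_nonneg _) (by linarith [Real.pi_gt_three]) harg
  -- law of cosines
  have hre : z.re = ‖z‖ * Real.cos (Complex.arg z) := (Complex.norm_mul_cos_arg z).symm
  have him : z.im = ‖z‖ * Real.sin (Complex.arg z) := (Complex.norm_mul_sin_arg z).symm
  have hre' : w.re = ‖w‖ * Real.cos (Complex.arg w) := (Complex.norm_mul_cos_arg w).symm
  have him' : w.im = ‖w‖ * Real.sin (Complex.arg w) := (Complex.norm_mul_sin_arg w).symm
  have hinner : z.re * w.re + z.im * w.im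
      = ‖z‖ * ‖w‖ * Real.cos (Complex.arg z - Complex.arg w) := by
    rw [hre, him, hre', him', Real.cos_sub]; ring
  have hsq : ‖z - w‖ ^ 2 = ‖z‖ ^ 2 + ‖w‖ ^ 2
      - 2 * (z.re * w.re + z.im * w.im) := by
    rw [Complex.sq_norm, Complex.sq_norm, Complex.sq_norm]
    simp [Complex.normSq_apply, Complex.sub_re, Complex.sub_im]
    ring
  have hz0' : 0 ≤ ‖z‖ := norm_nonneg z
  have hw0' : 0 ≤ ‖w‖ := norm_nonneg w
  nlinarith [norm_nonneg (z - w), sq_nonneg (‖z‖ - ‖w‖),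
    mul_le_mul_of_nonneg_left hcos (mul_nonneg hz0' hw0')]

noncomputable def udgGreedy (A : ℕ → ℕ → Prop) : ℕ → ℕ
  | i => sInf {c : ℕ | ∀ j, (h : j < i) → A j i → udgGreedy A j ≠ c}

lemma udgGreedy_mem (A : ℕ → ℕ → Prop) (i : ℕ) :
    ∀ j, j < i → A j i → udgGreedy A j ≠ udgGreedy A i := by
  have : udgGreedy A i ∈ {c : ℕ | ∀ j, (h : j < i) → A j i → udgGreedy A j ≠ c} := by
    rw [udgGreedy]
    apply Nat.sInf_mem
    classical
    obtain ⟨c, hc⟩ := Infinite.exists_notMem_finset ((Finset.range i).image (udgGreedy A))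
    exact ⟨c, fun j hj _ he => hc (Finset.mem_image.2 ⟨j, Finset.mem_range.2 hj, he⟩)⟩
  exact this

lemma udgGreedy_lt (A : ℕ → ℕ → Prop) [DecidableRel A] (d i : ℕ)
    (h : ((Finset.range i).filter (fun j => A j i)).card ≤ d) :
    udgGreedy A i < d + 1 := by
  classical
  set T := ((Finset.range i).filter (fun j => A j i)).image (udgGreedy A) with hT
  have hTcard : T.card ≤ d := le_trans (Finset.card_image_le) h
  have : ¬ (Finset.range (d+1) ⊆ T) := by
    intro hsub
    have := Finset.card_le_card hsub
    simp at this; omega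
  obtain ⟨c, hc1, hc2⟩ := Finset.not_subset.mp this
  have hcmem : c ∈ {c : ℕ | ∀ j, (h : j < i) → A j i → udgGreedy A j ≠ c} := by
    intro j hj hA he
    exact hc2 (Finset.mem_image.2 ⟨j, Finset.mem_filter.2 ⟨Finset.mem_range.2 hj, hA⟩, he⟩)
  have : udgGreedy A i ≤ c := by rw [udgGreedy]; exact Nat.sInf_le hcmem
  have := Finset.mem_range.mp hc1
  omega

/-- greedy coloring: max degree bound gives colorability -/
lemma udg_colorable {V : Type*} [Fintype V] (G : SimpleGraph V) (d : ℕ)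
    (hdeg : ∀ v, ∃ s : Finset V, (∀ u, G.Adj u v → u ∈ s) ∧ s.card ≤ d) :
    G.Colorable (d + 1) := by
  classical
  set n := Fintype.card V with hn
  set e := Fintype.equivFin V with he
  set A : ℕ → ℕ → Prop := fun i j =>
    ∃ (hi : i < n) (hj : j < n), G.Adj (e.symm ⟨i, hi⟩) (e.symm ⟨j, hj⟩) with hA
  haveI : DecidableRel A := fun _ _ => Classical.dec _
  have hbound : ∀ v : V, udgGreedy A (e v) < d + 1 := by
    intro v
    apply udgGreedy_lt
    obtain ⟨s, hs1, hs2⟩ := hdeg v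
    calc ((Finset.range (e v)).filter (fun j => A j (e v))).card
        ≤ s.card := by
          apply Finset.card_le_card_of_injOn
            (fun j => if h : j < n then e.symm ⟨j, h⟩ else v)
          · intro j hj
            simp only [Finset.mem_coe, Finset.mem_filter, Finset.mem_range] at hj ⊢
            obtain ⟨hj1, hj2⟩ := hj
            obtain ⟨hi, hj', hadj⟩ := hj2
            rw [dif_pos hi]
            apply hs1
            have hv : e.symm ⟨(e v : ℕ), hj'⟩ = v := by
              have h9 : (⟨(e v : ℕ), hj'⟩ : Fin n) = e v := by ext; rfl
              rw [h9, Equiv.symm_apply_apply]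
            rw [← hv]; exact hadj
          · intro a ha b hb hab
            simp only [Finset.mem_coe, Finset.mem_filter, Finset.mem_range] at ha hb
            obtain ⟨hai, -, -⟩ := ha.2
            obtain ⟨hbi, -, -⟩ := hb.2
            simp only [dif_pos hai, dif_pos hbi] at hab
            simpa using e.symm.injective hab
      _ ≤ d := hs2
  exact ⟨{
    toFun := fun v => ⟨udgGreedy A (e v), hbound v⟩
    map_rel' := by
      intro u v hadj heq
      simp only [Fin.mk.injEq] at heq
      have hne : (e u : ℕ) ≠ (e v : ℕ) := by
        intro hc
        exact G.ne_of_adj hadj (e.injective (Fin.ext hc))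
      rcases lt_or_gt_of_ne hne with h | h
      · exact udgGreedy_mem A (e v) (e u) h ⟨(e u).isLt, (e v).isLt, by simpa using hadj⟩ heq
      · exact udgGreedy_mem A (e u) (e v) h ⟨(e v).isLt, (e u).isLt, by simpa using hadj.symm⟩ heq.symm }⟩

noncomputable def udgC (x y : EuclideanSpace ℝ (Fin 2)) : ℂ := ⟨x 0 - y 0, x 1 - y 1⟩

lemma udg_dist (x y : EuclideanSpace ℝ (Fin 2)) : dist x y = ‖udgC x y‖ := by
  rw [EuclideanSpace.dist_eq, Complex.norm_def, Complex.normSq_apply, udgC]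
  simp [Real.dist_eq, Fin.sum_univ_two, sq_abs]
  ring_nf

lemma udgC_sub (x y z : EuclideanSpace ℝ (Fin 2)) : udgC x z - udgC y z = udgC x y := by
  simp only [udgC, Complex.ext_iff, Complex.sub_re, Complex.sub_im]
  constructor <;> ring

lemma udgSector_mem (z : ℂ) : udgSector z ∈ Finset.Icc (0 : ℤ) 5 := by
  have hpi : (0 : ℝ) < Real.pi := Real.pi_pos
  have h0 : (0 : ℤ) ≤ ⌊(Complex.arg z + Real.pi) / (Real.pi / 3)⌋ := by
    apply Int.floor_nonneg.2
    have h1 : 0 ≤ Complex.arg z + Real.pi := by linarith [Complex.neg_pi_lt_arg z]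
    exact div_nonneg h1 (by positivity)
  simp only [Finset.mem_Icc, udgSector]
  omega

/-- For a finite unit disk graph, `χ(G) ≤ 6·ω(G) − 5`, where `ω(G)` is the
clique number.  (This gives competitive ratio 6 for on-line first-fit coloring.) -/
theorem unitDiskGraph_chromaticNumber_le {V : Type*} [Fintype V] [Nonempty V]
    (P : V → EuclideanSpace ℝ (Fin 2)) :
    (unitDiskGraph P).chromaticNumber ≤
      (6 * (unitDiskGraph P).cliqueNum - 5 : ℕ) := by
  classical
  set G := unitDiskGraph P with hG
  set ω := G.cliqueNum with hω
  -- ω ≥ 1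
  have hω1 : 1 ≤ ω := by
    obtain ⟨v⟩ := (inferInstance : Nonempty V)
    have hc : G.IsClique ({v} : Finset V) := by simp
    have := SimpleGraph.IsClique.card_le_cliqueNum (tc := hc)
    simpa using this
  -- degree bound: every vertex has at most 6*(ω-1) neighbors
  have hdeg : ∀ v : V, ∃ s : Finset V, (∀ u, G.Adj u v → u ∈ s) ∧ s.card ≤ 6 * (ω - 1) := by
    intro v
    set s := Finset.univ.filter (fun u => G.Adj u v) with hs
    refine ⟨s, fun u hu => by simp [hs, hu], ?_⟩
    set f : V → ℤ := fun u => udgSector (udgC (P u) (P v)) with hf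
    have hmaps : ∀ u ∈ s, f u ∈ Finset.Icc (0 : ℤ) 5 := fun u _ => udgSector_mem _
    rw [Finset.card_eq_sum_card_fiberwise hmaps]
    have hfiber : ∀ k ∈ Finset.Icc (0 : ℤ) 5,
        (s.filter (fun u => f u = k)).card ≤ ω - 1 := by
      intro k _
      set t := s.filter (fun u => f u = k) with ht
      have hvt : v ∉ t := by
        intro hmem
        exact (G.loopless.irrefl v) (Finset.mem_filter.mp (Finset.mem_filter.mp hmem).1).2
      have hclique : G.IsClique (insert v t : Finset V) := by
        intro u hu w hw hne
        simp only [Finset.coe_insert, Set.mem_insert_iff, Finset.mem_coe] at hu hw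
        have hadj : ∀ x, x ∈ t → G.Adj x v := by
          intro x hx
          simp only [ht, hs, Finset.mem_filter, Finset.mem_univ, true_and] at hx
          exact hx.1
        rcases hu with rfl | hu
        · rcases hw with rfl | hw
          · exact absurd rfl hne
          · exact (hadj w hw).symm
        · rcases hw with rfl | hw
          · exact hadj u hu
          · -- both in the same sector
            refine ⟨hne, ?_⟩
            have h2u : dist (P u) (P v) ≤ 2 := (hadj u hu).2
            have h2w : dist (P w) (P v) ≤ 2 := (hadj w hw).2
            rw [udg_dist] at h2u h2w ⊢
            rw [← udgC_sub (P u) (P w) (P v)]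
            apply udg_key_s10 h2u h2w
            have hu' := (Finset.mem_filter.mp hu).2
            have hw' := (Finset.mem_filter.mp hw).2
            simp only [hf] at hu' hw'
            rw [hu', hw']
      have hcard : (insert v t).card = t.card + 1 := Finset.card_insert_of_notMem hvt
      have := SimpleGraph.IsClique.card_le_cliqueNum (tc := hclique)
      rw [hcard] at this
      omega
    calc ∑ k ∈ Finset.Icc (0 : ℤ) 5, (s.filter (fun u => f u = k)).card
        ≤ (Finset.Icc (0 : ℤ) 5).card • (ω - 1) := Finset.sum_le_card_nsmul _ _ _ hfiber
      _ = 6 * (ω - 1) := by rw [Int.card_Icc, smul_eq_mul]; rfl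
  have hcol : G.Colorable (6 * (ω - 1) + 1) := udg_colorable G (6 * (ω - 1)) hdeg
  have heq : 6 * ω - 5 = 6 * (ω - 1) + 1 := by omega
  rw [heq]
  exact hcol.chromaticNumber_le
end

section
/- Let G be a finite unit disk graph (proximity model in ℝ², threshold 2) and let δ(G) be the degeneracy of G (the largest δ such that some subgraph of G has minimum degree ≥ δ). Then the chromatic number of G satisfies χ(G) ≥ δ(G)/3 + 1, and hence the (δ(G)+1)-coloring uses at most 3·χ(G) colors. -/
set_option maxHeartbeats 1000000

/-- Two points in the middle 60° sector of the right half-disk of radius 2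
are at distance at most 2. -/
lemma udg_sector_mid (x1 y1 x2 y2 : ℝ) (hx1 : 0 ≤ x1) (hx2 : 0 ≤ x2)
    (h1 : 3*y1^2 ≤ x1^2) (h2 : 3*y2^2 ≤ x2^2)
    (hr1 : x1^2+y1^2 ≤ 4) (hr2 : x2^2+y2^2 ≤ 4) :
    (x1-x2)^2+(y1-y2)^2 ≤ 4 := by
  have hxx : 0 ≤ x1*x2 := mul_nonneg hx1 hx2
  have h9 : 9*(y1*y2)^2 ≤ (x1*x2)^2 := by
    nlinarith [mul_le_mul h1 h2 (by positivity) (sq_nonneg x1)]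
  have habs1 : 3*(y1*y2) ≤ x1*x2 := by nlinarith
  have habs2 : -(x1*x2) ≤ 3*(y1*y2) := by nlinarith
  have hab : 0 ≤ x1*x2 + y1*y2 := by nlinarith
  have hcross : (x1*y2 - x2*y1)^2 ≤ 4/3*(x1*x2)^2 := by
    nlinarith [mul_le_mul_of_nonneg_left h2 (sq_nonneg x1),
      mul_le_mul_of_nonneg_left h1 (sq_nonneg x2), mul_le_mul_of_nonneg_left habs2 hxx]
  have h3 : (x1*y2 - x2*y1)^2 ≤ 3*(x1*x2 + y1*y2)^2 := by nlinarith [mul_self_nonneg (x1*x2)]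
  have h4 : (x1^2+y1^2)*(x2^2+y2^2) ≤ 4*(x1*x2+y1*y2)^2 := by
    nlinarith [sq_nonneg (x1*y2 - x2*y1)]
  rcases le_total (x1^2+y1^2) (x2^2+y2^2) with h | h
  · have : x1^2+y1^2 ≤ 2*(x1*x2+y1*y2) := by nlinarith [sq_nonneg (x1^2+y1^2)]
    nlinarith
  · have key : (x2^2+y2^2)^2 ≤ 4*(x1*x2+y1*y2)^2 := by
      nlinarith [mul_le_mul_of_nonneg_right h (by positivity : (0:ℝ) ≤ x2^2+y2^2)]
    have : x2^2+y2^2 ≤ 2*(x1*x2+y1*y2) := by nlinarith [sq_nonneg (x2^2+y2^2), hab, key]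
    nlinarith

/-- Two points in the top 60° sector of the right half-disk of radius 2
are at distance at most 2. -/
lemma udg_sector_top (x1 y1 x2 y2 : ℝ) (hx1 : 0 ≤ x1) (hx2 : 0 ≤ x2)
    (hy1 : 0 ≤ y1) (hy2 : 0 ≤ y2)
    (h1 : x1^2 ≤ 3*y1^2) (h2 : x2^2 ≤ 3*y2^2)
    (hr1 : x1^2+y1^2 ≤ 4) (hr2 : x2^2+y2^2 ≤ 4) :
    (x1-x2)^2+(y1-y2)^2 ≤ 4 := by
  nlinarith [mul_nonneg hy1 hy2, mul_nonneg hx1 hx2, sq_nonneg (x1*y2 - x2*y1),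
    sq_nonneg (y1*y2 - 4), mul_nonneg (mul_nonneg hy1 hy2) (mul_nonneg hy1 hy2),
    mul_nonneg hx1 hy2, mul_nonneg hx2 hy1]

/-- Two points in the bottom 60° sector of the right half-disk of radius 2
are at distance at most 2. -/
lemma udg_sector_bot (x1 y1 x2 y2 : ℝ) (hx1 : 0 ≤ x1) (hx2 : 0 ≤ x2)
    (hy1 : y1 ≤ 0) (hy2 : y2 ≤ 0)
    (h1 : x1^2 ≤ 3*y1^2) (h2 : x2^2 ≤ 3*y2^2)
    (hr1 : x1^2+y1^2 ≤ 4) (hr2 : x2^2+y2^2 ≤ 4) :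
    (x1-x2)^2+(y1-y2)^2 ≤ 4 := by
  nlinarith [mul_nonneg (neg_nonneg.2 hy1) (neg_nonneg.2 hy2), mul_nonneg hx1 hx2,
    sq_nonneg (x1*y2 - x2*y1), sq_nonneg (y1*y2 - 4), mul_nonneg hx1 (neg_nonneg.2 hy2),
    mul_nonneg hx2 (neg_nonneg.2 hy1)]

lemma udg_dist_sq (p q : EuclideanSpace ℝ (Fin 2)) :
    dist p q ^ 2 = (p 0 - q 0)^2 + (p 1 - q 1)^2 := by
  rw [EuclideanSpace.dist_eq, Real.sq_sqrt (by positivity)]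
  simp [Fin.sum_univ_two, Real.dist_eq, sq_abs]


open scoped Classical in
/-- For a finite unit disk graph with degeneracy `δ` (the largest `δ` such that
some nonempty subgraph has minimum degree `≥ δ`) and chromatic number `χ`, we
have `χ ≥ δ/3 + 1`; hence the `(δ+1)`-coloring uses at most `3χ` colors. -/
theorem unitDiskGraph_chromaticNumber_ge {V : Type*} [Fintype V]
    (P : V → EuclideanSpace ℝ (Fin 2)) (δ χ : ℕ)
    (h1 : ∃ s : Finset V, s.Nonempty ∧
      ∀ v ∈ s, δ ≤ (s.filter fun u => (unitDiskGraph P).Adj v u).card)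
    (h2 : ∀ δ' : ℕ, (∃ s : Finset V, s.Nonempty ∧
      ∀ v ∈ s, δ' ≤ (s.filter fun u => (unitDiskGraph P).Adj v u).card) → δ' ≤ δ)
    (hχ : (unitDiskGraph P).chromaticNumber = (χ : ℕ∞)) :
    (δ : ℝ) / 3 + 1 ≤ (χ : ℝ) ∧ δ + 1 ≤ 3 * χ := by
  obtain ⟨s, hsne, hsdeg⟩ := h1
  obtain ⟨v, hv, hvmin⟩ := s.exists_min_image (fun u => (P u) 0) hsne
  have hcol : (unitDiskGraph P).Colorable χ :=
    (SimpleGraph.chromaticNumber_le_iff_colorable).mp (le_of_eq hχ)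
  obtain ⟨C⟩ := hcol
  have hχpos : 0 < χ := Fin.pos (C v)
  set G := unitDiskGraph P with hG
  set N : Finset V := s.filter (fun u => G.Adj v u) with hN
  -- coordinates relative to v
  set X : V → ℝ := fun u => (P u) 0 - (P v) 0 with hX
  set Y : V → ℝ := fun u => (P u) 1 - (P v) 1 with hY
  have hNfacts : ∀ u ∈ N, 0 ≤ X u ∧ (X u)^2 + (Y u)^2 ≤ 4 := by
    intro u hu
    rw [hN, Finset.mem_filter] at hu
    refine ⟨sub_nonneg.2 (hvmin u hu.1), ?_⟩
    have hd : dist (P v) (P u) ≤ 2 := hu.2.2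
    have := udg_dist_sq (P u) (P v)
    have hd2 : dist (P u) (P v) ^ 2 ≤ 4 := by
      rw [dist_comm]; nlinarith [dist_nonneg (x := P v) (y := P u)]
    rw [this] at hd2
    simpa [hX, hY] using hd2
  -- sector map
  set g : V → Fin 3 := fun u =>
    if 3*(Y u)^2 ≤ (X u)^2 then 0 else if 0 ≤ Y u then 1 else 2 with hg
  -- each color fiber in N has at most 3 elements
  have hfiber : ∀ c : Fin χ, (N.filter (fun u => C u = c)).card ≤ 3 := by
    intro c
    by_contra hlt
    push_neg at hlt
    obtain ⟨u, hu, w, hw, huw, hgeq⟩ :=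
      Finset.exists_ne_map_eq_of_card_lt_of_maps_to
        (t := (Finset.univ : Finset (Fin 3)))
        (by simpa using hlt) (fun a _ => Finset.mem_univ (g a))
    rw [Finset.mem_filter] at hu hw
    obtain ⟨hXu, hru⟩ := hNfacts u hu.1
    obtain ⟨hXw, hrw⟩ := hNfacts w hw.1
    -- same sector implies distance ≤ 2
    have hdist : (X u - X w)^2 + (Y u - Y w)^2 ≤ 4 := by
      by_cases c1 : 3*(Y u)^2 ≤ (X u)^2 <;> by_cases c2 : 3*(Y w)^2 ≤ (X w)^2
      · exact udg_sector_mid _ _ _ _ hXu hXw c1 c2 hru hrw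
      · exfalso
        simp only [hg, if_pos c1, if_neg c2] at hgeq
        by_cases c3 : 0 ≤ Y w <;> simp [c3] at hgeq
      · exfalso
        simp only [hg, if_pos c2, if_neg c1] at hgeq
        by_cases c3 : 0 ≤ Y u <;> simp [c3] at hgeq
      · push_neg at c1 c2
        by_cases c3 : 0 ≤ Y u <;> by_cases c4 : 0 ≤ Y w
        · exact udg_sector_top _ _ _ _ hXu hXw c3 c4 c1.le c2.le hru hrw
        · exfalso; simp only [hg, if_neg (not_le.2 c1), if_neg (not_le.2 c2),
            if_pos c3, if_neg c4] at hgeq; simp at hgeq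
        · exfalso; simp only [hg, if_neg (not_le.2 c1), if_neg (not_le.2 c2),
            if_neg c3, if_pos c4] at hgeq; simp at hgeq
        · push_neg at c3 c4
          exact udg_sector_bot _ _ _ _ hXu hXw c3.le c4.le c1.le c2.le hru hrw
    -- hence u and w are adjacent, contradicting equal colors
    have hduw : dist (P u) (P w) ≤ 2 := by
      have h2 : dist (P u) (P w) ^ 2 ≤ 4 := by
        rw [udg_dist_sq]
        have : (X u - X w)^2 + (Y u - Y w)^2
            = ((P u) 0 - (P w) 0)^2 + ((P u) 1 - (P w) 1)^2 := by
          simp only [hX, hY]; ring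
        linarith [this ▸ hdist]
      nlinarith [dist_nonneg (x := P u) (y := P w)]
    have hadj : G.Adj u w := ⟨huw, hduw⟩
    exact C.valid hadj (hu.2.trans hw.2.symm)
  -- the color of v is not used on N
  have himg : N.image (fun u => C u) ⊆ Finset.univ.erase (C v) := by
    intro c hc
    obtain ⟨u, hu, rfl⟩ := Finset.mem_image.mp hc
    rw [hN, Finset.mem_filter] at hu
    exact Finset.mem_erase.mpr ⟨(C.valid hu.2).symm, Finset.mem_univ _⟩
  have hcard1 : N.card ≤ 3 * (N.image (fun u => C u)).card :=
    Finset.card_le_mul_card_image N 3 (fun a _ => hfiber a)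
  have hcard2 : (N.image (fun u => C u)).card ≤ χ - 1 := by
    calc (N.image (fun u => C u)).card ≤ (Finset.univ.erase (C v)).card :=
          Finset.card_le_card himg
      _ = χ - 1 := by rw [Finset.card_erase_of_mem (Finset.mem_univ _)]; simp
  have hδN : δ ≤ N.card := hsdeg v hv
  have hmain : δ + 3 ≤ 3 * χ := by omega
  constructor
  · have : (δ : ℝ) + 3 ≤ 3 * χ := by exact_mod_cast hmain
    linarith
  · omega
end

section
/- Let G be a finite unit disk graph (proximity model in ℝ², threshold 2). Then for any maximal independent set D and any minimum dominating set D* of G, |D| ≤ 5·|D*|. -/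
open Real Finset

/-- Key trig computation: two nonzero points in the closed disk of radius 2 around the
origin at distance > 2 from each other have args with cosine of difference < 1/2. -/
lemma cos_arg_sub_lt_half (z w : ℂ) (hz : z ≠ 0) (hw : w ≠ 0)
    (hz2 : ‖z‖ ≤ 2) (hw2 : ‖w‖ ≤ 2)
    (hzw : 2 < ‖z - w‖) :
    Real.cos (z.arg - w.arg) < 1/2 := by
  set rz := ‖z‖ with hrz
  set rw := ‖w‖ with hrw
  set az := z.arg
  set aw := w.arg
  have hzre : z.re = rz * Real.cos az ∧ z.im = rz * Real.sin az := by
    rw [Complex.cos_arg hz, Complex.sin_arg]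
    have : rz ≠ 0 := norm_ne_zero_iff.mpr hz
    constructor <;> field_simp <;> rfl
  have hwre : w.re = rw * Real.cos aw ∧ w.im = rw * Real.sin aw := by
    rw [Complex.cos_arg hw, Complex.sin_arg]
    have : rw ≠ 0 := norm_ne_zero_iff.mpr hw
    constructor <;> field_simp <;> rfl
  have hrzpos : 0 < rz := norm_pos_iff.mpr hz
  have hrwpos : 0 < rw := norm_pos_iff.mpr hw
  have h4 : 4 < (z - w).re ^ 2 + (z - w).im ^ 2 := by
    have hnn : 0 ≤ ‖z - w‖ := norm_nonneg _
    have : 4 < (‖z - w‖) ^ 2 := by nlinarith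
    rwa [Complex.sq_norm, Complex.normSq_apply, ← sq, ← sq] at this
  rw [Complex.sub_re, Complex.sub_im, hzre.1, hzre.2, hwre.1, hwre.2] at h4
  have e : (rz * Real.cos az - rw * Real.cos aw) ^ 2
      + (rz * Real.sin az - rw * Real.sin aw) ^ 2
      = rz ^ 2 + rw ^ 2 - 2 * rz * rw * Real.cos (az - aw) := by
    rw [Real.cos_sub]
    nlinarith [Real.sin_sq_add_cos_sq az, Real.sin_sq_add_cos_sq aw]
  rw [e] at h4
  by_contra hc
  push_neg at hc
  nlinarith [mul_nonneg (mul_nonneg hrzpos.le hrwpos.le)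
      (by linarith : (0:ℝ) ≤ 2 * Real.cos (az - aw) - 1),
    mul_nonneg (by linarith : (0:ℝ) ≤ 2 - rz) (by linarith : (0:ℝ) ≤ 2 - rw),
    mul_nonneg hrzpos.le (by linarith : (0:ℝ) ≤ 2 - rz),
    mul_nonneg hrwpos.le (by linarith : (0:ℝ) ≤ 2 - rw)]

/-- Packing lemma: six points in the closed disk of radius 2 cannot be pairwise
at distance greater than 2. -/
lemma packing_six (c : ℂ) (p : Fin 6 → ℂ)
    (h1 : ∀ i, ‖p i - c‖ ≤ 2)
    (h2 : ∀ i j, i ≠ j → 2 < ‖p i - p j‖) : False := by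
  have hv : ∀ i, p i - c ≠ 0 := by
    intro i hzero
    have hic : p i = c := sub_eq_zero.mp hzero
    have hj : ∃ j, j ≠ i := by
      rcases eq_or_ne i 0 with rfl | h
      · exact ⟨1, by decide⟩
      · exact ⟨0, Ne.symm h⟩
    obtain ⟨j, hj⟩ := hj
    have h2j := h2 j i hj
    rw [hic] at h2j
    exact absurd (h1 j) (by linarith)
  set a : Fin 6 → ℝ := fun i => (p i - c).arg with ha
  have key : ∀ i j, i ≠ j → Real.cos (a i - a j) < 1/2 := by
    intro i j hij
    have hd : p i - c - (p j - c) = p i - p j := by ring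
    exact cos_arg_sub_lt_half _ _ (hv i) (hv j) (h1 i) (h1 j)
      (by rw [hd]; exact h2 i j hij)
  have hainj : Function.Injective a := by
    intro i j hij
    by_contra hne
    have := key i j hne
    rw [hij, sub_self, Real.cos_zero] at this
    norm_num at this
  set σ := Tuple.sort a with hσ
  set b : Fin 6 → ℝ := a ∘ σ with hb
  have hmono : Monotone b := Tuple.monotone_sort a
  have hbinj : Function.Injective b := hainj.comp σ.injective
  have hstrict : StrictMono b := hmono.strictMono_of_injective hbinj
  have keyb : ∀ i j : Fin 6, i ≠ j → Real.cos (b i - b j) < 1/2 := fun i j hij =>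
    key (σ i) (σ j) (σ.injective.ne hij)
  have gap : ∀ i : ℕ, ∀ h : i < 5,
      π/3 < b ⟨i+1, by omega⟩ - b ⟨i, by omega⟩ := by
    intro i h
    have hlt : b ⟨i, by omega⟩ < b ⟨i+1, by omega⟩ :=
      hstrict (by simp [Fin.lt_def])
    have hcos : Real.cos (b ⟨i+1, by omega⟩ - b ⟨i, by omega⟩) < 1/2 :=
      keyb _ _ (by simp [Fin.ext_iff])
    by_contra hle
    push_neg at hle
    have hpi : π/3 ≤ π := by linarith [Real.pi_pos]
    have := Real.cos_le_cos_of_nonneg_of_le_pi (by linarith) hpi hle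
    rw [Real.cos_pi_div_three] at this
    linarith
  set g : ℕ → ℝ := fun n => b ⟨min n 5, by omega⟩ with hg
  have tel : ∑ i ∈ Finset.range 5, (g (i+1) - g i) = g 5 - g 0 :=
    Finset.sum_range_sub g 5
  have sumlt : 5 * (π/3) < ∑ i ∈ Finset.range 5, (g (i+1) - g i) := by
    have hlt : ∑ _i ∈ Finset.range 5, (π/3 : ℝ) < ∑ i ∈ Finset.range 5, (g (i+1) - g i) := by
      apply Finset.sum_lt_sum_of_nonempty ⟨0, by simp⟩
      intro i hi
      have hi5 : i < 5 := Finset.mem_range.mp hi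
      have h1' : min (i+1) 5 = i + 1 := by omega
      have h2' : min i 5 = i := by omega
      have := gap i hi5
      simp only [hg]
      convert this using 3
      · rfl
      all_goals simp [h1', h2']
    simpa using hlt
  have hbig : 5 * (π/3) < g 5 - g 0 := by rw [← tel]; exact sumlt
  have hg5 : g 5 = b ⟨5, by omega⟩ := by simp [hg]
  have hg0 : g 0 = b ⟨0, by omega⟩ := by simp [hg]
  rw [hg5, hg0] at hbig
  set t := b ⟨5, by omega⟩ - b ⟨0, by omega⟩ with ht
  have ht2pi : t < 2 * π := by
    have h5 : b ⟨5, by omega⟩ ≤ π := Complex.arg_le_pi _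
    have h0 : -π < b ⟨0, by omega⟩ := Complex.neg_pi_lt_arg _
    simp only [ht]; linarith
  have hcos : Real.cos t < 1/2 := keyb _ _ (by decide)
  have hcos2 : Real.cos (2 * π - t) < 1/2 := by
    rw [Real.cos_two_pi_sub]; exact hcos
  have hpi : π/3 ≤ π := by linarith [Real.pi_pos]
  have h53 : 5 * (π/3) < t := hbig
  have := Real.cos_le_cos_of_nonneg_of_le_pi (by linarith : (0:ℝ) ≤ 2*π - t) hpi
    (by linarith : 2*π - t ≤ π/3)
  rw [Real.cos_pi_div_three] at this
  linarith

/-- In a finite unit disk graph, any maximal independent set `D` has size at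
most 5 times the size of a minimum dominating set `D*`. -/
theorem unitDiskGraph_maximalIndep_le_five_mul_domination {V : Type*} [Fintype V]
    (P : V → EuclideanSpace ℝ (Fin 2)) (D Dstar : Finset V)
    (hD_ind : (↑D : Set V).Pairwise fun a b => ¬ (unitDiskGraph P).Adj a b)
    (hD_max : ∀ v : V, v ∉ D →
      ¬ (insert v (↑D : Set V)).Pairwise fun a b => ¬ (unitDiskGraph P).Adj a b)
    (hdom : ∀ v : V, v ∉ Dstar → ∃ u ∈ Dstar, (unitDiskGraph P).Adj u v)
    (hmin : ∀ D' : Finset V,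
      (∀ v : V, v ∉ D' → ∃ u ∈ D', (unitDiskGraph P).Adj u v) →
      Dstar.card ≤ D'.card) :
    D.card ≤ 5 * Dstar.card := by
  classical
  by_contra hcon
  push_neg at hcon
  -- the dominator map
  set f : V → V := fun v => if h : v ∈ Dstar then v else (hdom v h).choose with hf
  have hf1 : ∀ v, f v ∈ Dstar := by
    intro v
    simp only [hf]
    split
    · assumption
    · exact (hdom v (by assumption)).choose_spec.1
  have hf2 : ∀ v, dist (P (f v)) (P v) ≤ 2 := by
    intro v
    simp only [hf]
    split
    · simp
    · exact (hdom v (by assumption)).choose_spec.2.2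
  obtain ⟨u, hu, hcard⟩ :=
    Finset.exists_lt_card_fiber_of_mul_lt_card_of_maps_to
      (f := f) (t := Dstar) (s := D) (n := 5) (fun a _ => hf1 a)
      (by rw [mul_comm] at hcon; exact hcon)
  have h6 : 6 ≤ ({x ∈ D | f x = u} : Finset V).card := hcard
  obtain ⟨T, hTs, hTc⟩ := Finset.exists_subset_card_eq h6
  let e := T.equivFinOfCardEq hTc
  set w : Fin 6 → V := fun i => (e.symm i : V) with hw
  have hwinj : Function.Injective w :=
    Subtype.coe_injective.comp e.symm.injective
  have hwmem : ∀ i, w i ∈ D ∧ f (w i) = u := by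
    intro i
    have : (w i) ∈ ({x ∈ D | f x = u} : Finset V) := hTs (e.symm i).2
    simpa using this
  set Φ := Complex.orthonormalBasisOneI.repr.symm with hΦ
  apply packing_six (Φ (P u)) (fun i => Φ (P (w i)))
  · intro i
    have : ‖Φ (P (w i)) - Φ (P u)‖ = dist (P (w i)) (P u) := by
      rw [← Complex.dist_eq]
      exact Φ.dist_map _ _
    rw [this, dist_comm]
    have := hf2 (w i)
    rwa [(hwmem i).2] at this
  · intro i j hij
    have hne : w i ≠ w j := fun h => hij (hwinj h)
    have hnadj := hD_ind (hwmem i).1 (hwmem j).1 hne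
    have hdist : ¬ dist (P (w i)) (P (w j)) ≤ 2 := by
      intro hd
      exact hnadj ⟨hne, hd⟩
    push_neg at hdist
    have : ‖Φ (P (w i)) - Φ (P (w j))‖ = dist (P (w i)) (P (w j)) := by
      rw [← Complex.dist_eq]
      exact Φ.dist_map _ _
    rwa [this]
end

section
/- Let G be a point-intersection graph of circles of arbitrary radii: vertices correspond to pairs (cᵥ, rᵥ) ∈ ℝ² × ℝ_{>0}, with u ~ v iff u ≠ v and dist(c_u, c_v) ≤ r_u + r_v. Let v be a vertex with minimal radius rᵥ. Then every independent set contained in the neighborhood of v has size at most 5. -/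
/-- The intersection graph of circles of arbitrary radii: vertex `v` has center
`c v` and radius `r v`, and two distinct vertices are adjacent iff the distance
between their centers is at most the sum of their radii. -/
def circleIntersectionGraph {V : Type*} (c : V → EuclideanSpace ℝ (Fin 2))
    (r : V → ℝ) : SimpleGraph V where
  Adj u v := u ≠ v ∧ dist (c u) (c v) ≤ r u + r v
  symm := by
    constructor
    intro u v h
    exact ⟨h.1.symm, by rw [dist_comm, add_comm]; exact h.2⟩
  loopless := by
    constructor
    intro v h
    exact h.1 rfl

private lemma circle_aux (A B I S : ℝ) (h : A * B / 2 ≤ I) (hA : 0 ≤ A) (hB : 0 ≤ B)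
    (hAS : A ≤ S) (hBS : B ≤ S) : A ^ 2 + B ^ 2 - 2 * I ≤ S ^ 2 := by
  rcases le_total A B with hc | hc
  · nlinarith [mul_nonneg (sub_nonneg.mpr hc) hA,
      mul_nonneg (sub_nonneg.mpr hBS) (by linarith : (0:ℝ) ≤ S + B)]
  · nlinarith [mul_nonneg (sub_nonneg.mpr hc) hB,
      mul_nonneg (sub_nonneg.mpr hAS) (by linarith : (0:ℝ) ≤ S + A)]

/-- In a circle intersection graph, if `v` is a vertex of minimal radius then
every independent set contained in the neighborhood of `v` has size at most 5. -/
theorem circleIntersectionGraph_min_radius_indep_le_five {V : Type*}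
    (c : V → EuclideanSpace ℝ (Fin 2)) (r : V → ℝ) (hr : ∀ v : V, 0 < r v)
    (v : V) (hmin : ∀ u : V, r v ≤ r u) (s : Finset V)
    (hnbr : ∀ x ∈ s, (circleIntersectionGraph c r).Adj v x)
    (hind : (↑s : Set V).Pairwise fun a b => ¬ (circleIntersectionGraph c r).Adj a b) :
    s.card ≤ 5 := by
  by_contra hcard
  push_neg at hcard
  obtain ⟨t, hts, ht6⟩ := Finset.exists_subset_card_eq (s := s) (n := 6) (by omega)
  by_cases hA : ∃ x ∈ t, c x = c v
  · obtain ⟨x, hxt, hxc⟩ := hA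
    obtain ⟨y, hyt, hyx⟩ := Finset.exists_mem_ne (s := t) (by omega) x
    refine hind (hts hxt) (hts hyt) (Ne.symm hyx) ⟨Ne.symm hyx, ?_⟩
    have h1 := (hnbr y (hts hyt)).2
    have h2 := hmin x
    calc dist (c x) (c y) = dist (c v) (c y) := by rw [hxc]
      _ ≤ r v + r y := h1
      _ ≤ r x + r y := by linarith
  · push_neg at hA
    set z : V → ℂ := fun w => ⟨c w 0 - c v 0, c w 1 - c v 1⟩ with hzdef
    have hdist : ∀ x y : V, dist (c x) (c y) = ‖z x - z y‖ := by
      intro x y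
      rw [EuclideanSpace.dist_eq, Complex.norm_def]
      congr 1
      simp [Fin.sum_univ_two, Real.dist_eq, Complex.normSq_apply, z,
        Complex.sub_re, Complex.sub_im, sq_abs]
      ring
    have hzv : z v = 0 := by simp [z, Complex.ext_iff]
    have hzabs : ∀ x ∈ s, ‖z x‖ ≤ r v + r x := by
      intro x hx
      have h := (hnbr x hx).2
      rwa [hdist v x, hzv, zero_sub, norm_neg] at h
    have hzne : ∀ x ∈ t, z x ≠ 0 := by
      intro x hx h0
      apply hA x hx
      have h1 : c x 0 - c v 0 = 0 := by
        have := congrArg Complex.re h0; simpa [z] using this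
      have h2 : c x 1 - c v 1 = 0 := by
        have := congrArg Complex.im h0; simpa [z] using this
      ext i
      fin_cases i <;> simp <;> linarith
    set θ : V → ℝ := fun w => (z w).arg with hθdef
    -- key pairwise fact
    have hcos : ∀ x ∈ t, ∀ y ∈ t, x ≠ y → Real.cos (θ x - θ y) < 1/2 := by
      intro x hx y hy hxy
      by_contra hcc
      push_neg at hcc
      refine hind (hts hx) (hts hy) hxy ⟨hxy, ?_⟩
      have hzx := hzne x hx
      have hzy := hzne y hy
      have hAx : (0:ℝ) < ‖z x‖ := norm_pos_iff.mpr hzx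
      have hAy : (0:ℝ) < ‖z y‖ := norm_pos_iff.mpr hzy
      have hcos_eq : Real.cos (θ x - θ y) =
          ((z x).re * (z y).re + (z x).im * (z y).im) /
            (‖z x‖ * ‖z y‖) := by
        rw [Real.cos_sub, Complex.cos_arg hzx, Complex.cos_arg hzy,
          Complex.sin_arg, Complex.sin_arg]
        field_simp
        try ring
      rw [hcos_eq] at hcc
      have hinner : ‖z x‖ * ‖z y‖ / 2 ≤
          (z x).re * (z y).re + (z x).im * (z y).im := by
        have := (le_div_iff₀ (by positivity)).mp hcc
        linarith
      have hax := hzabs x (hts hx)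
      have hay := hzabs y (hts hy)
      have hminx := hmin x
      have hminy := hmin y
      have hrv := hr v
      have hsqx : ‖z x‖ ^ 2 = (z x).re * (z x).re + (z x).im * (z x).im := by
        rw [Complex.sq_norm, Complex.normSq_apply]
      have hsqy : ‖z y‖ ^ 2 = (z y).re * (z y).re + (z y).im * (z y).im := by
        rw [Complex.sq_norm, Complex.normSq_apply]
      have hx2 : ‖z x‖ ≤ r x + r y := by linarith
      have hy2 : ‖z y‖ ≤ r x + r y := by linarith
      have hsq : dist (c x) (c y) ^ 2 ≤ (r x + r y) ^ 2 := by
        rw [hdist x y, Complex.sq_norm, Complex.normSq_apply, Complex.sub_re, Complex.sub_im]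
        have expand : ((z x).re - (z y).re) * ((z x).re - (z y).re) +
            ((z x).im - (z y).im) * ((z x).im - (z y).im)
            = ‖z x‖ ^ 2 + ‖z y‖ ^ 2
              - 2 * ((z x).re * (z y).re + (z x).im * (z y).im) := by
          rw [hsqx, hsqy]; ring
        rw [expand]
        exact circle_aux _ _ _ _ hinner hAx.le hAy.le hx2 hy2
      have := Real.sqrt_le_sqrt hsq
      rwa [Real.sqrt_sq dist_nonneg, Real.sqrt_sq (by linarith : (0:ℝ) ≤ r x + r y)] at this
    -- sorting
    set L : List V := t.toList.mergeSort (fun a b => θ a ≤ θ b) with hLdef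
    have hLperm : L.Perm t.toList := List.mergeSort_perm _ _
    have hLnodup : L.Nodup := hLperm.symm.nodup t.nodup_toList
    have hLlen : L.length = 6 := by rw [hLperm.length_eq, Finset.length_toList, ht6]
    have hLmem : ∀ w ∈ L, w ∈ t := by
      intro w hw
      exact Finset.mem_toList.mp (hLperm.subset hw)
    have hLsorted : L.Pairwise (fun a b => θ a ≤ θ b) := by
      have htr : ∀ a b c : V, (θ a ≤ θ b) → (θ b ≤ θ c) → (θ a ≤ θ c) :=
        fun a b c h1 h2 => le_trans h1 h2
      have h := List.pairwise_mergeSort (le := fun a b => decide (θ a ≤ θ b))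
        (fun a b c h1 h2 => by
          simp only [decide_eq_true_iff] at *; exact le_trans h1 h2)
        (fun a b => by
          simp only [Bool.or_eq_true, decide_eq_true_iff]; exact le_total (θ a) (θ b))
        t.toList
      refine List.Pairwise.imp ?_ h
      intro a b hab
      simpa using hab
    set g : Fin 6 → V := fun i => L.get (Fin.cast hLlen.symm i) with hgdef
    have hgmem : ∀ i, g i ∈ t := fun i => hLmem _ (List.get_mem _ _)
    have hgne : ∀ i j : Fin 6, i ≠ j → g i ≠ g j := by
      intro i j hij h
      apply hij
      have h2 := (hLnodup.get_inj_iff).mp h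
      simpa [Fin.ext_iff] using h2
    have hgmono : ∀ i j : Fin 6, i < j → θ (g i) ≤ θ (g j) := by
      intro i j hij
      exact hLsorted.rel_get_of_lt (by simpa using hij)
    have gap : ∀ i j : Fin 6, i < j → Real.pi/3 < θ (g j) - θ (g i) := by
      intro i j hij
      have h1 := hgmono i j hij
      have h2 := hcos (g j) (hgmem j) (g i) (hgmem i) (hgne j i (ne_of_gt hij))
      by_contra hle
      push_neg at hle
      have hpi := Real.pi_pos
      have h3 : Real.cos (Real.pi/3) ≤ Real.cos (θ (g j) - θ (g i)) :=
        Real.cos_le_cos_of_nonneg_of_le_pi (by linarith) (by linarith) hle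
      rw [Real.cos_pi_div_three] at h3
      linarith
    have hpi := Real.pi_pos
    have g01 := gap 0 1 (by decide)
    have g12 := gap 1 2 (by decide)
    have g23 := gap 2 3 (by decide)
    have g34 := gap 3 4 (by decide)
    have g45 := gap 4 5 (by decide)
    have g05 := hcos (g 5) (hgmem 5) (g 0) (hgmem 0) (hgne 5 0 (by decide))
    have hub : θ (g 5) ≤ Real.pi := Complex.arg_le_pi _
    have hlb : -Real.pi < θ (g 0) := Complex.neg_pi_lt_arg _
    -- wrap-around
    have hD : 5 * (Real.pi/3) < θ (g 5) - θ (g 0) := by linarith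
    have hD2 : θ (g 5) - θ (g 0) < 2 * Real.pi := by linarith
    have hw : Real.cos (θ (g 5) - θ (g 0)) =
        Real.cos (2 * Real.pi - (θ (g 5) - θ (g 0))) := by
      rw [← Real.cos_sub_two_pi (2 * Real.pi - (θ (g 5) - θ (g 0))),
        show (2 * Real.pi - (θ (g 5) - θ (g 0))) - 2 * Real.pi
          = -(θ (g 5) - θ (g 0)) by ring, Real.cos_neg]
    have h3 : Real.cos (Real.pi/3) ≤ Real.cos (2 * Real.pi - (θ (g 5) - θ (g 0))) :=
      Real.cos_le_cos_of_nonneg_of_le_pi (by linarith) (by linarith) (by linarith)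
    rw [Real.cos_pi_div_three] at h3
    linarith [hw ▸ g05]
end
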